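/- arXiv:2108.04520 — 5 statements merged into one kernel-verified Lean document; each statement's English description precedes it below -/
import Mathlib

section
/- Let k be a natural number and let X_0, X_1, ..., X_k be independent random variables on a probability space, each uniformly distributed on the unit interval [0,1]. Let S be any random finite subset of {1, ..., k} (i.e., a measurable map from the sample space to subsets of {1,...,k}, with no restriction on how S depends on the X_i). Then the probability of the event {for all i ∈ S, X_0 > X_i} is at least 1/(k+1). -/
open MeasureTheory ProbabilityTheory

/-- if `X_0, …, X_k` are independent uniform-`[0,1]` random variables and
`S` is any measurable random subset of `{1, …, k}` (no restriction on how `S` depends on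
the `X_i`), then the probability that `X_0 > X_i` for all `i ∈ S` is at least `1/(k+1)`.
The random subset is encoded by its membership events `{ω | i ∈ S ω}`. -/
theorem stmt_1
    {Ω : Type*} [MeasurableSpace Ω] (P : Measure Ω) [IsProbabilityMeasure P]
    (k : ℕ) (X : Fin (k + 1) → Ω → ℝ)
    (hmeas : ∀ i, Measurable (X i))
    (hindep : iIndepFun X P)
    (hunif : ∀ i, Measure.map (X i) P = volume.restrict (Set.Icc (0 : ℝ) 1))
    (S : Ω → Finset (Fin (k + 1)))
    (hS0 : ∀ ω, 0 ∉ S ω)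
    (hSmeas : ∀ i, MeasurableSet {ω | i ∈ S ω}) :
    1 / (k + 1) ≤ P {ω | ∀ i ∈ S ω, X 0 ω > X i ω} := by
  classical
  set μ : Measure ℝ := volume.restrict (Set.Icc (0 : ℝ) 1) with hμ
  have hμprob : IsProbabilityMeasure μ := by
    constructor
    rw [hμ, Measure.restrict_apply MeasurableSet.univ, Set.univ_inter, Real.volume_Icc]
    norm_num
  -- the joint map
  set T : Ω → (Fin (k + 1) → ℝ) := fun ω i => X i ω with hT
  have hTmeas : Measurable T := measurable_pi_lambda _ fun i => hmeas i
  set π : Measure (Fin (k + 1) → ℝ) := Measure.pi (fun _ => μ) with hπ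
  -- the joint law is the product measure
  have hmap : Measure.map T P = π := by
    rw [hπ]
    refine (Measure.pi_eq fun s hs => ?_).symm
    rw [Measure.map_apply hTmeas (MeasurableSet.univ_pi hs)]
    have hpre : T ⁻¹' Set.pi Set.univ s = ⋂ i ∈ Finset.univ, X i ⁻¹' s i := by
      ext ω
      simp [Set.mem_pi, hT]
    rw [hpre, hindep.measure_inter_preimage_eq_mul Finset.univ (fun i _ => hs i)]
    refine Finset.prod_congr rfl fun i _ => ?_
    rw [← hunif i, Measure.map_apply (hmeas i) (hs i)]
  -- the "strict max at j" sets
  set B : Fin (k + 1) → Set (Fin (k + 1) → ℝ) :=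
    fun j => {x | ∀ i, i ≠ j → x i < x j} with hB
  have hBmeas : ∀ j, MeasurableSet (B j) := by
    intro j
    have : B j = ⋂ i, ⋂ _ : i ≠ j, {x : Fin (k + 1) → ℝ | x i < x j} := by
      ext x; simp [hB]
    rw [this]
    exact MeasurableSet.iInter fun i => MeasurableSet.iInter fun _ =>
      measurableSet_lt (measurable_pi_apply i) (measurable_pi_apply j)
  -- exchangeability: π (B j) = π (B 0)
  have hswap : ∀ j : Fin (k + 1), π (B j) = π (B 0) := by
    intro j
    set e : Equiv.Perm (Fin (k + 1)) := Equiv.swap 0 j with he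
    have hmp : MeasurePreserving (MeasurableEquiv.piCongrLeft (fun _ => ℝ) e) π π :=
      measurePreserving_piCongrLeft (fun _ => μ) e
    have hpre : (MeasurableEquiv.piCongrLeft (fun _ => ℝ) e) ⁻¹' B 0 = B j := by
      ext x
      have hap0 : ∀ m, (MeasurableEquiv.piCongrLeft (fun _ => ℝ) e) x (e m) = x m := by
        intro m
        rw [MeasurableEquiv.coe_piCongrLeft]
        exact Equiv.piCongrLeft_apply_apply (fun _ => ℝ) e x m
      have hap : ∀ m, (MeasurableEquiv.piCongrLeft (fun _ => ℝ) e) x m = x (e.symm m) := by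
        intro m
        have h := hap0 (e.symm m)
        rwa [Equiv.apply_symm_apply] at h
      constructor
      · intro hx i hij
        have h2 : e i ≠ (0 : Fin (k + 1)) := by
          intro h
          apply hij
          have : i = e.symm 0 := by rw [← h]; simp
          rw [this, he]
          simp [Equiv.swap_apply_left]
        have := hx (e i) h2
        rw [hap (e i), hap 0] at this
        simpa [he, Equiv.swap_apply_left] using this
      · intro hx i hi0
        rw [hap i, hap 0]
        have h2 : e.symm i ≠ j := by
          intro h
          apply hi0
          have : i = e j := by rw [← h]; simp
          rw [this, he, Equiv.swap_apply_right]
        have := hx (e.symm i) h2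
        simpa [he, Equiv.swap_apply_left] using this
    calc π (B j) = π ((MeasurableEquiv.piCongrLeft (fun _ => ℝ) e) ⁻¹' B 0) := by rw [hpre]
      _ = π (B 0) := hmp.measure_preimage (hBmeas 0).nullMeasurableSet
  -- ties are null
  have hsingleton : ∀ x : ℝ, μ {x} = 0 := by
    intro x
    rw [hμ]
    exact le_antisymm (le_trans (Measure.restrict_le_self _) (by simp)) zero_le
  have hatomless : ∀ i j : Fin (k + 1), i ≠ j → P {ω | X i ω = X j ω} = 0 := by
    intro i j hij
    have hind : IndepFun (X i) (X j) P := hindep.indepFun hij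
    have hprod : P.map (fun ω => (X i ω, X j ω)) = μ.prod μ := by
      rw [(indepFun_iff_map_prod_eq_prod_map_map (hmeas i).aemeasurable
        (hmeas j).aemeasurable).mp hind, hunif i, hunif j]
    have hset : {ω | X i ω = X j ω} = (fun ω => (X i ω, X j ω)) ⁻¹' Set.diagonal ℝ := by
      ext ω; simp [Set.mem_diagonal_iff, eq_comm]
    rw [hset, ← Measure.map_apply ((hmeas i).prodMk (hmeas j)) (isClosed_diagonal.measurableSet), hprod]
    rw [Measure.prod_apply (isClosed_diagonal.measurableSet)]
    have : ∀ x : ℝ, μ (Prod.mk x ⁻¹' Set.diagonal ℝ) = 0 := by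
      intro x
      have : Prod.mk x ⁻¹' Set.diagonal ℝ = {x} := by
        ext y; simp [Set.mem_diagonal_iff, eq_comm]
      rw [this]; exact hsingleton x
    simp [this]
  -- covering: everything is in some A_j or a tie
  set A : Fin (k + 1) → Set Ω := fun j => T ⁻¹' B j with hA
  have hcover : (Set.univ : Set Ω) ⊆ (⋃ j, A j) ∪ ⋃ i, ⋃ j, ⋃ (_ : i ≠ j), {ω | X i ω = X j ω} := by
    intro ω _
    obtain ⟨j, hj⟩ := Finite.exists_max (fun i => X i ω)
    by_cases hstrict : ∀ i, i ≠ j → X i ω < X j ω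
    · exact Or.inl (Set.mem_iUnion.mpr ⟨j, fun i hi => hstrict i hi⟩)
    · push_neg at hstrict
      obtain ⟨i, hij, hle⟩ := hstrict
      refine Or.inr ?_
      have : X i ω = X j ω := le_antisymm (hj i) hle
      exact Set.mem_iUnion.mpr ⟨i, Set.mem_iUnion.mpr ⟨j, Set.mem_iUnion.mpr ⟨hij, this⟩⟩⟩
  have hties : P (⋃ i, ⋃ j, ⋃ (_ : i ≠ j), {ω | X i ω = X j ω}) = 0 := by
    refine measure_iUnion_null fun i => measure_iUnion_null fun j => measure_iUnion_null fun h => ?_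
    exact hatomless i j h
  -- sum up
  have hPA : ∀ j, P (A j) = π (B j) := by
    intro j
    rw [hA, ← Measure.map_apply hTmeas (hBmeas j), hmap]
  have hone : (1 : ENNReal) ≤ (k + 1 : ℕ) * P (A 0) := by
    have h1 : (1 : ENNReal) = P Set.univ := (measure_univ).symm
    have h2 : P Set.univ ≤ P (⋃ j, A j) + P (⋃ i, ⋃ j, ⋃ (_ : i ≠ j), {ω | X i ω = X j ω}) :=
      le_trans (measure_mono hcover) (measure_union_le _ _)
    rw [hties, add_zero] at h2
    have h3 : P (⋃ j, A j) ≤ ∑ j : Fin (k + 1), P (A j) := measure_iUnion_fintype_le _ _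
    have h4 : ∑ j : Fin (k + 1), P (A j) = (k + 1 : ℕ) * P (A 0) := by
      have : ∀ j : Fin (k + 1), P (A j) = P (A 0) := by
        intro j; rw [hPA j, hswap j, ← hPA 0]
      rw [Finset.sum_congr rfl fun j _ => this j]
      simp [Finset.card_univ, mul_comm]
    calc (1 : ENNReal) = P Set.univ := h1
      _ ≤ P (⋃ j, A j) := h2
      _ ≤ ∑ j : Fin (k + 1), P (A j) := h3
      _ = (k + 1 : ℕ) * P (A 0) := h4
  -- A 0 is contained in the target event
  have hsub : A 0 ⊆ {ω | ∀ i ∈ S ω, X 0 ω > X i ω} := by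
    intro ω hω i hiS
    have hi0 : i ≠ 0 := fun h => hS0 ω (h ▸ hiS)
    exact hω i hi0
  have hfinal : (1 : ENNReal) / (k + 1 : ℕ) ≤ P (A 0) :=
    ENNReal.div_le_of_le_mul (by rw [mul_comm] at hone; exact hone)
  calc (1 : ENNReal) / (k + 1) = 1 / (k + 1 : ℕ) := by push_cast; ring_nf
    _ ≤ P (A 0) := hfinal
    _ ≤ P {ω | ∀ i ∈ S ω, X 0 ω > X i ω} := measure_mono hsub
end

section
/- Let k be a natural number and let X_0, X_1, ..., X_k be independent random variables on a probability space, each uniformly distributed on the unit interval [0,1]. Let S be a random subset of {1, ..., k} that is independent of the random vector (X_0, X_1, ..., X_k). Then the probability of the event {for all i ∈ S, X_0 > X_i} equals the expectation E[1/(|S|+1)], where |S| denotes the cardinality of S. -/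
open MeasureTheory ProbabilityTheory
open scoped ENNReal

/-- Finsets of a type carry the discrete σ-algebra. -/
instance finsetMeasurableSpace {α : Type*} : MeasurableSpace (Finset α) := ⊤

instance {α : Type*} : MeasurableSingletonClass (Finset α) := ⟨fun _ => trivial⟩

lemma lintegral_pow_Icc (m : ℕ) :
    ∫⁻ x in Set.Icc (0:ℝ) 1, ENNReal.ofReal x ^ m
      = 1 / ((m : ℝ≥0∞) + 1) := by
  have h1 : ∫⁻ x in Set.Icc (0:ℝ) 1, ENNReal.ofReal x ^ m
      = ∫⁻ x in Set.Icc (0:ℝ) 1, ENNReal.ofReal (x ^ m) := by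
    refine setLIntegral_congr_fun measurableSet_Icc ?_
    intro x hx
    beta_reduce
    rw [ENNReal.ofReal_pow hx.1]
  have hint : IntegrableOn (fun x : ℝ => x ^ m) (Set.Icc (0:ℝ) 1) volume :=
    (continuous_pow m).integrableOn_Icc
  have h2 : ∫⁻ x in Set.Icc (0:ℝ) 1, ENNReal.ofReal (x ^ m)
      = ENNReal.ofReal (∫ x in Set.Icc (0:ℝ) 1, x ^ m) := by
    rw [← ofReal_integral_eq_lintegral_ofReal hint ?_]
    filter_upwards [ae_restrict_mem measurableSet_Icc] with x hx using pow_nonneg hx.1 m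
  have h3 : (∫ x in Set.Icc (0:ℝ) 1, x ^ m) = 1 / (m + 1) := by
    rw [MeasureTheory.integral_Icc_eq_integral_Ioc,
      ← intervalIntegral.integral_of_le (by norm_num : (0:ℝ) ≤ 1), integral_pow]
    norm_num
  rw [h1, h2, h3, ENNReal.ofReal_div_of_pos (by positivity)]
  congr 1
  · simp
  · rw [ENNReal.ofReal_add (by positivity) zero_le_one]
    simp

lemma pi_event (k : ℕ) (s : Finset (Fin (k + 1))) (hs : 0 ∉ s) :
    Measure.pi (fun _ : Fin (k + 1) => volume.restrict (Set.Icc (0:ℝ) 1))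
      {f | ∀ i ∈ s, f 0 > f i} = 1 / ((s.card : ℝ≥0∞) + 1) := by
  classical
  set ν : Measure ℝ := volume.restrict (Set.Icc (0:ℝ) 1) with hν
  have hνuniv : ν Set.univ = 1 := by
    simp [hν, Real.volume_Icc]
  have hmp := measurePreserving_piFinSuccAbove (fun _ : Fin (k + 1) => ν) 0
  set e := MeasurableEquiv.piFinSuccAbove (fun _ : Fin (k + 1) => ℝ) 0 with he
  set B : Set (ℝ × (Fin k → ℝ)) := {p | ∀ j : Fin k, j.succ ∈ s → p.2 j < p.1} with hB
  have hBmeas : MeasurableSet B := by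
    have : B = ⋂ j : Fin k, {p : ℝ × (Fin k → ℝ) | j.succ ∈ s → p.2 j < p.1} := by
      ext p; simp [hB]
    rw [this]
    refine MeasurableSet.iInter fun j => ?_
    by_cases hj : j.succ ∈ s
    · simp only [hj, true_implies]
      exact measurableSet_lt (measurable_snd.eval) measurable_fst
    · simp only [hj, false_implies, Set.setOf_true]
      exact MeasurableSet.univ
  have hpre : {f : Fin (k + 1) → ℝ | ∀ i ∈ s, f 0 > f i} = e ⁻¹' B := by
    ext f
    simp only [Set.mem_preimage, Set.mem_setOf_eq, hB, he,
      MeasurableEquiv.piFinSuccAbove, MeasurableEquiv.coe_mk,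
      Fin.insertNthEquiv, Equiv.coe_fn_symm_mk, Fin.removeNth, Fin.zero_succAbove]
    constructor
    · intro h j hj; exact h j.succ hj
    · intro h i hi
      have h0 : i ≠ 0 := fun h' => hs (h' ▸ hi)
      have := h (i.pred h0) (by simpa using hi)
      simpa using this
  have hcard : (Finset.univ.filter (fun j : Fin k => j.succ ∈ s)).card = s.card := by
    refine Finset.card_bij (fun j _ => j.succ) ?_ ?_ ?_
    · intro a ha; simpa using (Finset.mem_filter.1 ha).2
    · intro a _ b _ h; exact Fin.succ_injective _ h
    · intro i hi
      have h0 : i ≠ 0 := fun h' => hs (h' ▸ hi)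
      exact ⟨i.pred h0, by simp [Finset.mem_filter, hi], by simp⟩
  rw [hpre, ← MeasurableEquiv.map_apply e, hmp.map_eq, Measure.prod_apply hBmeas]
  have hslice : ∀ x ∈ Set.Icc (0:ℝ) 1,
      (Measure.pi fun _ : Fin k => ν) (Prod.mk x ⁻¹' B) = ENNReal.ofReal x ^ s.card := by
    intro x hx
    have : Prod.mk x ⁻¹' B
        = Set.pi Set.univ (fun j : Fin k => if j.succ ∈ s then Set.Iio x else Set.univ) := by
      ext g
      simp only [Set.mem_preimage, hB, Set.mem_setOf_eq, Set.mem_pi, Set.mem_univ,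
        true_implies]
      constructor
      · intro h j
        by_cases hj : j.succ ∈ s
        · simp [hj, h j hj]
        · simp [hj]
      · intro h j hj
        simpa [hj] using h j
    rw [this, Measure.pi_pi]
    have hIio : ν (Set.Iio x) = ENNReal.ofReal x := by
      rw [hν, Measure.restrict_apply measurableSet_Iio]
      have : Set.Iio x ∩ Set.Icc (0:ℝ) 1 = Set.Ico 0 x := by
        ext y
        constructor
        · rintro ⟨h1, h2, _⟩; exact ⟨h2, h1⟩
        · rintro ⟨h1, h2⟩; exact ⟨h2, h1, le_trans (le_of_lt h2) hx.2⟩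
      rw [this, Real.volume_Ico, sub_zero]
    calc ∏ j : Fin k, ν (if j.succ ∈ s then Set.Iio x else Set.univ)
        = ∏ j : Fin k, (if j.succ ∈ s then ENNReal.ofReal x else 1) := by
          refine Finset.prod_congr rfl fun j _ => ?_
          by_cases hj : j.succ ∈ s <;> simp [hj, hIio, hνuniv]
      _ = ENNReal.ofReal x ^ s.card := by
          rw [Finset.prod_ite, Finset.prod_const, Finset.prod_const_one, mul_one, hcard]
  calc ∫⁻ x, (Measure.pi fun _ : Fin k => ν) (Prod.mk x ⁻¹' B) ∂ν
      = ∫⁻ x in Set.Icc (0:ℝ) 1, ENNReal.ofReal x ^ s.card ∂volume := by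
        rw [hν]
        exact setLIntegral_congr_fun measurableSet_Icc
          hslice
    _ = 1 / ((s.card : ℝ≥0∞) + 1) := lintegral_pow_Icc s.card

/-- if `X_0, …, X_k` are independent uniform-`[0,1]` random variables and
`S` is a random subset of `{1, …, k}` that is independent of the random vector
`(X_0, …, X_k)`, then the probability that `X_0 > X_i` for all `i ∈ S` equals the
expectation `E[1/(|S|+1)]`. -/
theorem stmt_2
    {Ω : Type*} [MeasurableSpace Ω] (P : Measure Ω) [IsProbabilityMeasure P]
    (k : ℕ) (X : Fin (k + 1) → Ω → ℝ)
    (hmeas : ∀ i, Measurable (X i))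
    (hindep : iIndepFun X P)
    (hunif : ∀ i, Measure.map (X i) P = volume.restrict (Set.Icc (0 : ℝ) 1))
    (S : Ω → Finset (Fin (k + 1)))
    (hS0 : ∀ ω, 0 ∉ S ω)
    (hSmeas : Measurable S)
    (hSindep : IndepFun S (fun ω (i : Fin (k + 1)) => X i ω) P) :
    P {ω | ∀ i ∈ S ω, X 0 ω > X i ω}
      = ∫⁻ ω, 1 / (((S ω).card : ℝ≥0∞) + 1) ∂P := by
  classical
  have hvecm : Measurable (fun ω (i : Fin (k + 1)) => X i ω) := measurable_pi_iff.2 hmeas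
  have hmap : Measure.map (fun ω (i : Fin (k + 1)) => X i ω) P
      = Measure.pi (fun _ : Fin (k + 1) => volume.restrict (Set.Icc (0:ℝ) 1)) := by
    symm
    refine Measure.pi_eq fun t ht => ?_
    rw [Measure.map_apply hvecm (MeasurableSet.univ_pi ht)]
    have hpre : (fun ω (i : Fin (k + 1)) => X i ω) ⁻¹' Set.pi Set.univ t
        = ⋂ i ∈ Finset.univ, X i ⁻¹' t i := by
      ext ω; simp [Set.mem_pi]
    rw [hpre, hindep.measure_inter_preimage_eq_mul Finset.univ (fun i _ => ht i)]
    exact Finset.prod_congr rfl fun i _ => by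
      rw [← Measure.map_apply (hmeas i) (ht i), hunif i]
  set B : Finset (Fin (k + 1)) → Set (Fin (k + 1) → ℝ) :=
    fun s => {f | ∀ i ∈ s, f 0 > f i} with hBdef
  have hBmeas : ∀ s, MeasurableSet (B s) := by
    intro s
    have : B s = ⋂ i ∈ s, {f : Fin (k + 1) → ℝ | f i < f 0} := by
      ext f; simp [hBdef]
    rw [this]
    exact MeasurableSet.biInter s.countable_toSet fun i _ =>
      measurableSet_lt (measurable_pi_apply i) (measurable_pi_apply 0)
  have hPA : ∀ s : Finset (Fin (k + 1)), 0 ∉ s →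
      P ((fun ω (i : Fin (k + 1)) => X i ω) ⁻¹' B s) = 1 / ((s.card : ℝ≥0∞) + 1) := by
    intro s hs
    rw [← Measure.map_apply hvecm (hBmeas s), hmap]
    exact pi_event k s hs
  have hE : {ω | ∀ i ∈ S ω, X 0 ω > X i ω}
      = ⋃ s ∈ (Finset.univ : Finset (Finset (Fin (k + 1)))),
          (S ⁻¹' {s} ∩ (fun ω (i : Fin (k + 1)) => X i ω) ⁻¹' B s) := by
    ext ω
    simp only [Set.mem_setOf_eq, Set.mem_iUnion, Set.mem_inter_iff, Set.mem_preimage,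
      Set.mem_singleton_iff, hBdef, Finset.mem_univ, exists_true_left]
    constructor
    · intro h; exact ⟨S ω, rfl, h⟩
    · rintro ⟨s, rfl, h⟩; exact h
  have hdisj : Set.PairwiseDisjoint
      ((Finset.univ : Finset (Finset (Fin (k + 1)))) : Set (Finset (Fin (k + 1))))
      (fun s => S ⁻¹' {s} ∩ (fun ω (i : Fin (k + 1)) => X i ω) ⁻¹' B s) := by
    intro s _ t _ hst
    refine Set.disjoint_left.2 fun ω hω hω' => hst ?_
    have h1 : S ω = s := hω.1
    have h2 : S ω = t := hω'.1
    rw [← h1, ← h2]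
  have hmeasterm : ∀ s : Finset (Fin (k + 1)),
      MeasurableSet (S ⁻¹' {s} ∩ (fun ω (i : Fin (k + 1)) => X i ω) ⁻¹' B s) :=
    fun s => (hSmeas (MeasurableSet.singleton s)).inter (hvecm (hBmeas s))
  rw [hE, measure_biUnion_finset hdisj fun s _ => hmeasterm s]
  have hterm : ∀ s : Finset (Fin (k + 1)),
      P (S ⁻¹' {s} ∩ (fun ω (i : Fin (k + 1)) => X i ω) ⁻¹' B s)
        = (1 / ((s.card : ℝ≥0∞) + 1)) * P (S ⁻¹' {s}) := by
    intro s
    rw [hSindep.measure_inter_preimage_eq_mul {s} (B s) trivial (hBmeas s)]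
    by_cases hs : 0 ∈ s
    · have : S ⁻¹' {s} = ∅ := by
        ext ω
        simp only [Set.mem_preimage, Set.mem_singleton_iff, Set.mem_empty_iff_false,
          iff_false]
        intro h; exact hS0 ω (h ▸ hs)
      simp [this]
    · rw [hPA s hs, mul_comm]
  have hRHS : ∫⁻ ω, 1 / (((S ω).card : ℝ≥0∞) + 1) ∂P
      = ∑ s : Finset (Fin (k + 1)), (1 / ((s.card : ℝ≥0∞) + 1)) * P (S ⁻¹' {s}) := by
    rw [← lintegral_map (f := fun s : Finset (Fin (k + 1)) => 1 / ((s.card : ℝ≥0∞) + 1))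
      measurable_from_top hSmeas, lintegral_fintype]
    refine Finset.sum_congr rfl fun s _ => ?_
    rw [Measure.map_apply hSmeas (MeasurableSet.singleton s)]
  rw [hRHS]
  exact Finset.sum_congr rfl fun s _ => hterm s
end

section
/- Let m be a natural number and let X_0, X_1, X_2, ... be an infinite sequence of independent random variables on a probability space, each uniformly distributed on the unit interval [0,1]. Let S be a random finite subset of the positive integers such that (a) |S| ≤ m almost surely, and (b) for every i ≥ 1, the event {i ∈ S} is measurable with respect to the σ-algebra generated by X_1, ..., X_{i-1} (for i = 1, this σ-algebra is trivial, so the inclusion of 1 is deterministic). Then the probability of the event {for all i ∈ S, X_0 > X_i} is at least 1/(m+1). -/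
open MeasureTheory ProbabilityTheory
open scoped ENNReal

noncomputable def clip (x : ℝ) : ℝ := max (min x 1) 0

lemma clip_meas : Measurable clip := by
  unfold clip; exact (measurable_id.min measurable_const).max measurable_const

lemma clip_nonneg (x : ℝ) : 0 ≤ clip x := le_max_right _ _
lemma clip_le_one (x : ℝ) : clip x ≤ 1 := max_le (min_le_right _ _) zero_le_one

noncomputable def ind {α : Type*} (s : Set α) (x : α) : ℝ := s.indicator (fun _ => (1:ℝ)) x

lemma ind_of_mem {α : Type*} {s : Set α} {x : α} (h : x ∈ s) : ind s x = 1 :=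
  Set.indicator_of_mem h _

lemma ind_of_not_mem {α : Type*} {s : Set α} {x : α} (h : x ∉ s) : ind s x = 0 :=
  Set.indicator_of_notMem h _

lemma ind_nonneg {α : Type*} (s : Set α) (x : α) : 0 ≤ ind s x := by
  classical
  by_cases h : x ∈ s
  · rw [ind_of_mem h]; norm_num
  · rw [ind_of_not_mem h]

lemma ind_le_one {α : Type*} (s : Set α) (x : α) : ind s x ≤ 1 := by
  classical
  by_cases h : x ∈ s
  · rw [ind_of_mem h]
  · rw [ind_of_not_mem h]; norm_num

lemma ind_meas {α : Type*} [MeasurableSpace α] {s : Set α} (hs : MeasurableSet s) :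
    Measurable (ind s) := measurable_const.indicator hs

lemma integrable_of_bdd {α : Type*} [MeasurableSpace α] {μ : Measure α} [IsFiniteMeasure μ]
    {f : α → ℝ} (hf : AEStronglyMeasurable f μ) (hb : ∀ x, ‖f x‖ ≤ 1) : Integrable f μ :=
  (integrable_const 1).mono' hf (Filter.Eventually.of_forall hb)

lemma norm_unit {a : ℝ} (h0 : 0 ≤ a) (h1 : a ≤ 1) : ‖a‖ ≤ 1 := by
  rw [Real.norm_eq_abs, abs_of_nonneg h0]; exact h1

lemma integral_ind_lt (a : ℝ) :
    ∫ t, ind (Set.Iio a) t ∂(volume.restrict (Set.Icc (0:ℝ) 1)) = clip a := by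
  classical
  rw [show (fun t => ind (Set.Iio a) t) = (Set.Iio a).indicator (fun _ => (1:ℝ)) from rfl]
  rw [show ((Set.Iio a).indicator (fun _ => (1:ℝ))) = ((Set.Iio a).indicator (1 : ℝ → ℝ)) from rfl]
  rw [integral_indicator_one measurableSet_Iio, measureReal_def, Measure.restrict_apply measurableSet_Iio]
  rcases le_or_gt a 0 with h | h
  · have hset : Set.Iio a ∩ Set.Icc 0 1 = ∅ := by
      ext x
      simp only [Set.mem_inter_iff, Set.mem_Iio, Set.mem_Icc, Set.mem_empty_iff_false,
        iff_false, not_and, and_imp]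
      intro hx h0 _; linarith
    rw [hset]
    simp only [measure_empty, ENNReal.toReal_zero, clip]
    exact (max_eq_right (le_trans (min_le_left a 1) h)).symm
  · rcases le_or_gt a 1 with h2 | h2
    · have hset : Set.Iio a ∩ Set.Icc 0 1 = Set.Ico 0 a := by
        ext x
        simp only [Set.mem_inter_iff, Set.mem_Iio, Set.mem_Icc, Set.mem_Ico]
        constructor
        · rintro ⟨hx, h0, _⟩; exact ⟨h0, hx⟩
        · rintro ⟨h0, hx⟩; exact ⟨hx, h0, by linarith⟩
      rw [hset, Real.volume_Ico, ENNReal.toReal_ofReal (by linarith)]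
      simp [clip, min_eq_left h2, max_eq_left h.le]
    · have hset : Set.Iio a ∩ Set.Icc 0 1 = Set.Icc 0 1 := by
        ext x
        simp only [Set.mem_inter_iff, Set.mem_Iio, Set.mem_Icc]
        exact ⟨fun h => h.2, fun hx => ⟨by linarith [hx.2], hx⟩⟩
      rw [hset, Real.volume_Icc, ENNReal.toReal_ofReal (by norm_num)]
      simp [clip, min_eq_right h2.le]

lemma step_lemma {Ω : Type*} [MeasurableSpace Ω] (P : Measure Ω) [IsProbabilityMeasure P]
    (X : ℕ → Ω → ℝ) (hmeas : ∀ i, Measurable (X i))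
    (hindep : iIndepFun X P) (n : ℕ)
    (hunif : Measure.map (X (n+1)) P = volume.restrict (Set.Icc (0:ℝ) 1))
    (G : (↥(Finset.range (n+1)) → ℝ) → ℝ) (hG : Measurable G) (hGb : ∀ v, ‖G v‖ ≤ 1) :
    ∫ ω, G (fun i => X i ω) * ind {ω' | X (n+1) ω' < X 0 ω'} ω ∂P
      = ∫ ω, G (fun i => X i ω) * clip (X 0 ω) ∂P := by
  classical
  set e0 : ↥(Finset.range (n+1)) := ⟨0, Finset.mem_range.mpr (Nat.succ_pos n)⟩ with he0
  set V : Ω → (↥(Finset.range (n+1)) → ℝ) := fun ω i => X i ω with hV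
  have hVmeas : Measurable V := measurable_pi_iff.mpr fun i => hmeas i
  have hindepVX : IndepFun V (X (n+1)) P := by
    have h1 := hindep.indepFun_finset (Finset.range (n+1)) {n+1}
      (by simp [Finset.disjoint_left]; omega) hmeas
    exact h1.comp measurable_id
      (measurable_pi_apply (⟨n+1, Finset.mem_singleton_self _⟩ : ↥({n+1} : Finset ℕ)))
  have hmap : P.map (fun ω => (V ω, X (n+1) ω)) = (P.map V).prod (P.map (X (n+1))) :=
    (indepFun_iff_map_prod_eq_prod_map_map hVmeas.aemeasurable
      (hmeas (n+1)).aemeasurable).mp hindepVX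
  set h : ((↥(Finset.range (n+1)) → ℝ) × ℝ) → ℝ :=
    fun p => G p.1 * ind {q : ((↥(Finset.range (n+1)) → ℝ) × ℝ) | q.2 < q.1 e0} p with hh
  have hsetmeas : MeasurableSet {q : ((↥(Finset.range (n+1)) → ℝ) × ℝ) | q.2 < q.1 e0} :=
    measurableSet_lt measurable_snd ((measurable_pi_apply e0).comp measurable_fst)
  have hhmeas : Measurable h := (hG.comp measurable_fst).mul (ind_meas hsetmeas)
  have hhb : ∀ p, ‖h p‖ ≤ 1 := by
    intro p
    rw [hh]
    simp only [norm_mul]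
    calc ‖G p.1‖ * ‖ind _ p‖ ≤ 1 * 1 := by
          refine mul_le_mul (hGb p.1) (norm_unit (ind_nonneg _ _) (ind_le_one _ _))
            (norm_nonneg _) zero_le_one
      _ = 1 := one_mul 1
  haveI h1 := Measure.isProbabilityMeasure_map (μ := P) hVmeas.aemeasurable
  haveI h2 := Measure.isProbabilityMeasure_map (μ := P) (hmeas (n+1)).aemeasurable
  have key : ∫ ω, h (V ω, X (n+1) ω) ∂P = ∫ v, G v * clip (v e0) ∂(P.map V) := by
    rw [← integral_map (hVmeas.prodMk (hmeas (n+1))).aemeasurable hhmeas.aestronglyMeasurable,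
      hmap, integral_prod _ (integrable_of_bdd hhmeas.aestronglyMeasurable hhb)]
    congr 1
    ext v
    rw [hunif]
    have hind : ∀ t : ℝ, ind {q : ((↥(Finset.range (n+1)) → ℝ) × ℝ) | q.2 < q.1 e0} (v, t)
        = ind (Set.Iio (v e0)) t := by
      intro t
      by_cases ht : t < v e0
      · rw [ind_of_mem (show (v, t) ∈ {q : ((↥(Finset.range (n+1)) → ℝ) × ℝ) | q.2 < q.1 e0} from ht),
          ind_of_mem (show t ∈ Set.Iio (v e0) from ht)]
      · rw [ind_of_not_mem (show (v, t) ∉ {q : ((↥(Finset.range (n+1)) → ℝ) × ℝ) | q.2 < q.1 e0} from ht),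
          ind_of_not_mem (show t ∉ Set.Iio (v e0) from ht)]
    calc ∫ t, h (v, t) ∂(volume.restrict (Set.Icc (0:ℝ) 1))
        = ∫ t, G v * ind (Set.Iio (v e0)) t ∂(volume.restrict (Set.Icc (0:ℝ) 1)) := by
          refine integral_congr_ae (Filter.Eventually.of_forall fun t => ?_)
          rw [hh]; simp only; rw [hind t]
      _ = G v * ∫ t, ind (Set.Iio (v e0)) t ∂(volume.restrict (Set.Icc (0:ℝ) 1)) :=
          integral_const_mul _ _
      _ = G v * clip (v e0) := by rw [integral_ind_lt]
  have lhs_eq : ∫ ω, G (fun i => X i ω) * ind {ω' | X (n+1) ω' < X 0 ω'} ω ∂P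
      = ∫ ω, h (V ω, X (n+1) ω) ∂P := by
    refine integral_congr_ae (Filter.Eventually.of_forall fun ω => ?_)
    show G (fun i => X i ω) * ind {ω' | X (n+1) ω' < X 0 ω'} ω
        = G (V ω) * ind {q : ((↥(Finset.range (n+1)) → ℝ) × ℝ) | q.2 < q.1 e0} (V ω, X (n+1) ω)
    by_cases hω : X (n+1) ω < X 0 ω
    · rw [ind_of_mem (show ω ∈ {ω' | X (n+1) ω' < X 0 ω'} from hω),
        ind_of_mem (show (V ω, X (n+1) ω) ∈ {q : ((↥(Finset.range (n+1)) → ℝ) × ℝ) | q.2 < q.1 e0} from hω)]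
    · rw [ind_of_not_mem (show ω ∉ {ω' | X (n+1) ω' < X 0 ω'} from hω),
        ind_of_not_mem (show (V ω, X (n+1) ω) ∉ {q : ((↥(Finset.range (n+1)) → ℝ) × ℝ) | q.2 < q.1 e0} from hω)]
  have rhs_eq : ∫ v, G v * clip (v e0) ∂(P.map V)
      = ∫ ω, G (fun i => X i ω) * clip (X 0 ω) ∂P := by
    rw [integral_map hVmeas.aemeasurable]
    exact (hG.mul (clip_meas.comp (measurable_pi_apply e0))).aestronglyMeasurable
  rw [lhs_eq, key, rhs_eq]

lemma En_meas {Ω : Type*} [MeasurableSpace Ω] (X : ℕ → Ω → ℝ) (hmeas : ∀ i, Measurable (X i))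
    (S : Ω → Finset ℕ) (hSmeas : ∀ i, MeasurableSet {ω | i ∈ S ω}) (k : ℕ) :
    MeasurableSet {ω | ∀ i ∈ Finset.Icc 1 k, i ∈ S ω → X i ω < X 0 ω} := by
  have h : {ω | ∀ i ∈ Finset.Icc 1 k, i ∈ S ω → X i ω < X 0 ω}
      = ⋂ i ∈ Finset.Icc 1 k, ({ω | i ∈ S ω}ᶜ ∪ {ω | X i ω < X 0 ω}) := by
    ext ω
    simp only [Set.mem_setOf_eq, Set.mem_iInter, Set.mem_union, Set.mem_compl_iff,
      Set.mem_setOf_eq]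
    refine forall₂_congr fun i _ => ?_
    tauto
  rw [h]
  exact (Finset.Icc 1 k).measurableSet_biInter fun i _ =>
    ((hSmeas i).compl).union (measurableSet_lt (hmeas i) (hmeas 0))

lemma cn_meas {Ω : Type*} [MeasurableSpace Ω]
    (S : Ω → Finset ℕ) (hSmeas : ∀ i, MeasurableSet {ω | i ∈ S ω}) (k : ℕ) :
    Measurable (fun ω => ((Finset.Icc 1 k).filter (fun i => i ∈ S ω)).card) := by
  classical
  have h : (fun ω => ((Finset.Icc 1 k).filter (fun i => i ∈ S ω)).card)
      = fun ω => ∑ i ∈ Finset.Icc 1 k, if i ∈ S ω then 1 else 0 := by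
    funext ω; exact Finset.card_filter _ _
  rw [h]
  exact Finset.measurable_sum _ fun i _ =>
    Measurable.ite (hSmeas i) measurable_const measurable_const

lemma step_int {Ω : Type*} [MeasurableSpace Ω] (P : Measure Ω) [IsProbabilityMeasure P]
    (m : ℕ) (X : ℕ → Ω → ℝ) (hmeas : ∀ i, Measurable (X i))
    (hindep : iIndepFun X P)
    (S : Ω → Finset ℕ)
    (hSmeas : ∀ i, MeasurableSet {ω | i ∈ S ω})
    (hcard : ∀ᵐ ω ∂P, (S ω).card ≤ m)
    (hadapt : ∀ i, 1 ≤ i →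
      MeasurableSet[⨆ j ∈ Finset.Ico 1 i, MeasurableSpace.comap (X j) inferInstance]
        {ω | i ∈ S ω})
    (n : ℕ) (hunif : Measure.map (X (n+1)) P = volume.restrict (Set.Icc (0:ℝ) 1)) :
    (∫ ω, ind {ω' | ∀ i ∈ Finset.Icc 1 (n+1), i ∈ S ω' → X i ω' < X 0 ω'} ω *
        clip (X 0 ω) ^ (m - ((Finset.Icc 1 (n+1)).filter (fun i => i ∈ S ω)).card) ∂P)
    = ∫ ω, ind {ω' | ∀ i ∈ Finset.Icc 1 n, i ∈ S ω' → X i ω' < X 0 ω'} ω *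
        clip (X 0 ω) ^ (m - ((Finset.Icc 1 n).filter (fun i => i ∈ S ω)).card) ∂P := by
  classical
  set V : Ω → (↥(Finset.range (n+1)) → ℝ) := fun ω i => X i ω with hVdef
  have hVmeas : Measurable V := measurable_pi_iff.mpr fun i => hmeas i
  set idx : ℕ → ↥(Finset.range (n+1)) :=
    fun i => ⟨i % (n+1), Finset.mem_range.mpr (Nat.mod_lt _ (Nat.succ_pos n))⟩ with hidx
  have hVidx : ∀ ω (i : ℕ), i ≤ n → V ω (idx i) = X i ω := by
    intro ω i hi
    simp only [hVdef, hidx]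
    congr 1
    exact Nat.mod_eq_of_lt (by omega)
  have hcomap_le : ∀ j, j ≤ n →
      (MeasurableSpace.comap (X j) inferInstance : MeasurableSpace Ω) ≤
        MeasurableSpace.comap V MeasurableSpace.pi := by
    intro j hj
    have hXj : X j = (fun v : ↥(Finset.range (n+1)) → ℝ => v (idx j)) ∘ V := by
      funext ω; exact (hVidx ω j hj).symm
    rw [hXj, ← MeasurableSpace.comap_comp]
    exact MeasurableSpace.comap_mono (measurable_iff_comap_le.mp (measurable_pi_apply _))
  have hfac : ∀ i, 1 ≤ i → i ≤ n+1 → ∃ Bs : Set (↥(Finset.range (n+1)) → ℝ),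
      MeasurableSet Bs ∧ V ⁻¹' Bs = {ω | i ∈ S ω} := by
    intro i h1 h2
    have hle : (⨆ j ∈ Finset.Ico 1 i, MeasurableSpace.comap (X j) inferInstance :
        MeasurableSpace Ω) ≤ MeasurableSpace.comap V MeasurableSpace.pi := by
      refine iSup₂_le fun j hj => hcomap_le j ?_
      rw [Finset.mem_Ico] at hj; omega
    exact MeasurableSpace.measurableSet_comap.mp (hle _ (hadapt i h1))
  choose! B hBmeas hBpre using hfac
  have hBmem : ∀ ω i, 1 ≤ i → i ≤ n+1 → (V ω ∈ B i ↔ i ∈ S ω) := by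
    intro ω i h1 h2
    have := Set.ext_iff.mp (hBpre i h1 h2) ω
    simpa using this
  set EG : Set (↥(Finset.range (n+1)) → ℝ) :=
    {v | ∀ i ∈ Finset.Icc 1 n, v ∈ B i → v (idx i) < v (idx 0)} with hEGdef
  set cG : (↥(Finset.range (n+1)) → ℝ) → ℕ :=
    fun v => ((Finset.Icc 1 n).filter (fun i => v ∈ B i)).card with hcGdef
  set G : (↥(Finset.range (n+1)) → ℝ) → ℝ :=
    fun v => (ind EG v * ind (B (n+1)) v) * clip (v (idx 0)) ^ (m - cG v - 1) with hGdef
  have hEGmeas : MeasurableSet EG := by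
    have h : EG = ⋂ i ∈ Finset.Icc 1 n, ((B i)ᶜ ∪ {v | v (idx i) < v (idx 0)}) := by
      ext v
      simp only [hEGdef, Set.mem_setOf_eq, Set.mem_iInter, Set.mem_union, Set.mem_compl_iff]
      refine forall₂_congr fun i _ => ?_
      tauto
    rw [h]
    refine (Finset.Icc 1 n).measurableSet_biInter fun i hi => ?_
    rw [Finset.mem_Icc] at hi
    exact ((hBmeas i hi.1 (by omega)).compl).union
      (measurableSet_lt (measurable_pi_apply _) (measurable_pi_apply _))
  have hcGmeas : Measurable cG := by
    have h : cG = fun v => ∑ i ∈ Finset.Icc 1 n, if v ∈ B i then 1 else 0 := by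
      funext v; exact Finset.card_filter _ _
    rw [h]
    refine Finset.measurable_sum _ fun i hi => ?_
    rw [Finset.mem_Icc] at hi
    exact Measurable.ite (hBmeas i hi.1 (by omega)) measurable_const measurable_const
  have hGmeas : Measurable G := by
    refine Measurable.mul (Measurable.mul ?_ ?_) ?_
    · exact ind_meas hEGmeas
    · exact ind_meas (hBmeas (n+1) (by omega) le_rfl)
    · exact (clip_meas.comp (measurable_pi_apply _)).pow
        ((measurable_from_nat (f := fun k => m - k - 1)).comp hcGmeas)
  have hGnn : ∀ v, 0 ≤ G v := fun v =>
    mul_nonneg (mul_nonneg (ind_nonneg _ _) (ind_nonneg _ _)) (pow_nonneg (clip_nonneg _) _)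
  have hGle : ∀ v, G v ≤ 1 := fun v =>
    mul_le_one₀ (mul_le_one₀ (ind_le_one _ _) (ind_nonneg _ _) (ind_le_one _ _))
      (pow_nonneg (clip_nonneg _) _) (pow_le_one₀ (clip_nonneg _) (clip_le_one _))
  have hGb : ∀ v, ‖G v‖ ≤ 1 := fun v => norm_unit (hGnn v) (hGle v)
  -- Ω-side shorthand
  set e : Ω → ℝ :=
    fun ω => ind {ω' | ∀ i ∈ Finset.Icc 1 n, i ∈ S ω' → X i ω' < X 0 ω'} ω with hedef
  set s1 : Ω → ℝ := fun ω => ind {ω' | n+1 ∈ S ω'} ω with hs1def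
  set cn : Ω → ℕ := fun ω => ((Finset.Icc 1 n).filter (fun i => i ∈ S ω)).card with hcndef
  have hemeas : Measurable e := ind_meas (En_meas X hmeas S hSmeas n)
  have hs1meas : Measurable s1 := ind_meas (hSmeas (n+1))
  have hcnmeas : Measurable cn := cn_meas S hSmeas n
  have hpowmeas : ∀ k : ℕ, Measurable fun ω => clip (X 0 ω) ^ (m - cn ω - k) := fun k =>
    (clip_meas.comp (hmeas 0)).pow ((measurable_from_nat (f := fun j => m - j - k)).comp hcnmeas)
  have he01 : ∀ ω, 0 ≤ e ω ∧ e ω ≤ 1 := fun ω => ⟨ind_nonneg _ _, ind_le_one _ _⟩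
  have hs01 : ∀ ω, 0 ≤ s1 ω ∧ s1 ω ≤ 1 := fun ω => ⟨ind_nonneg _ _, ind_le_one _ _⟩
  have hp01 : ∀ (ω : Ω) (k : ℕ), 0 ≤ clip (X 0 ω) ^ k ∧ clip (X 0 ω) ^ k ≤ 1 := fun ω k =>
    ⟨pow_nonneg (clip_nonneg _) _, pow_le_one₀ (clip_nonneg _) (clip_le_one _)⟩
  -- identification of G ∘ V
  have hGV : ∀ ω, G (fun i : ↥(Finset.range (n+1)) => X i ω) =
      (e ω * s1 ω) * clip (X 0 ω) ^ (m - cn ω - 1) := by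
    intro ω
    have hv : (fun i : ↥(Finset.range (n+1)) => X i ω) = V ω := rfl
    have hEG' : (V ω ∈ EG) ↔ (∀ i ∈ Finset.Icc 1 n, i ∈ S ω → X i ω < X 0 ω) := by
      constructor
      · intro h i hi hiS
        have hi' := Finset.mem_Icc.mp hi
        have := h i hi ((hBmem ω i hi'.1 (by omega)).mpr hiS)
        rwa [hVidx ω i hi'.2, hVidx ω 0 (Nat.zero_le n)] at this
      · intro h i hi hBi
        have hi' := Finset.mem_Icc.mp hi
        rw [hVidx ω i hi'.2, hVidx ω 0 (Nat.zero_le n)]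
        exact h i hi ((hBmem ω i hi'.1 (by omega)).mp hBi)
    have hc : cG (V ω) = cn ω := by
      simp only [hcGdef, hcndef]
      congr 1
      refine Finset.filter_congr fun i hi => ?_
      have hi' := Finset.mem_Icc.mp hi
      exact hBmem ω i hi'.1 (by omega)
    have h1 : ind EG (V ω) = e ω := by
      by_cases hcnd : (∀ i ∈ Finset.Icc 1 n, i ∈ S ω → X i ω < X 0 ω)
      · rw [ind_of_mem (hEG'.mpr hcnd)]
        exact (ind_of_mem
          (show ω ∈ {ω' | ∀ i ∈ Finset.Icc 1 n, i ∈ S ω' → X i ω' < X 0 ω'} from hcnd)).symm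
      · rw [ind_of_not_mem (fun hm => hcnd (hEG'.mp hm))]
        exact (ind_of_not_mem
          (show ω ∉ {ω' | ∀ i ∈ Finset.Icc 1 n, i ∈ S ω' → X i ω' < X 0 ω'} from hcnd)).symm
    have h2 : ind (B (n+1)) (V ω) = s1 ω := by
      have hB1 := hBmem ω (n+1) (by omega) le_rfl
      by_cases hcnd : n+1 ∈ S ω
      · rw [ind_of_mem (hB1.mpr hcnd)]
        exact (ind_of_mem (show ω ∈ {ω' | n+1 ∈ S ω'} from hcnd)).symm
      · rw [ind_of_not_mem (fun hm => hcnd (hB1.mp hm))]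
        exact (ind_of_not_mem (show ω ∉ {ω' | n+1 ∈ S ω'} from hcnd)).symm
    rw [hv, hGdef]
    simp only
    rw [h1, h2, hc, hVidx ω 0 (Nat.zero_le n)]
  -- decomposition functions
  set F1 : Ω → ℝ := fun ω => e ω * (1 - s1 ω) * clip (X 0 ω) ^ (m - cn ω) with hF1def
  set F2 : Ω → ℝ := fun ω => ((e ω * s1 ω) * clip (X 0 ω) ^ (m - cn ω - 1)) *
    ind {ω' | X (n+1) ω' < X 0 ω'} ω with hF2def
  set F2' : Ω → ℝ := fun ω => ((e ω * s1 ω) * clip (X 0 ω) ^ (m - cn ω - 1)) *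
    clip (X 0 ω) with hF2'def
  set F3 : Ω → ℝ := fun ω => (e ω * s1 ω) * clip (X 0 ω) ^ (m - cn ω) with hF3def
  have hltmeas : Measurable (ind {ω' | X (n+1) ω' < X 0 ω'}) :=
    ind_meas (measurableSet_lt (hmeas (n+1)) (hmeas 0))
  have hF1meas : Measurable F1 :=
    (hemeas.mul (measurable_const.sub hs1meas)).mul
      ((clip_meas.comp (hmeas 0)).pow ((measurable_from_nat (f := fun j => m - j)).comp hcnmeas))
  have hF2meas : Measurable F2 := (((hemeas.mul hs1meas).mul (hpowmeas 1)).mul hltmeas)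
  have hF2'meas : Measurable F2' :=
    ((hemeas.mul hs1meas).mul (hpowmeas 1)).mul (clip_meas.comp (hmeas 0))
  have hF3meas : Measurable F3 := (hemeas.mul hs1meas).mul
    ((clip_meas.comp (hmeas 0)).pow ((measurable_from_nat (f := fun j => m - j)).comp hcnmeas))
  have hint : ∀ (f : Ω → ℝ), Measurable f → (∀ ω, ‖f ω‖ ≤ 1) → Integrable f P :=
    fun f hf hb => integrable_of_bdd hf.aestronglyMeasurable hb
  have hF1b : ∀ ω, ‖F1 ω‖ ≤ 1 := fun ω =>
    norm_unit (mul_nonneg (mul_nonneg (he01 ω).1 (by linarith [(hs01 ω).2])) (hp01 ω _).1)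
      (mul_le_one₀ (mul_le_one₀ (he01 ω).2 (by linarith [(hs01 ω).2]) (by linarith [(hs01 ω).1]))
        (hp01 ω _).1 (hp01 ω _).2)
  have hF2b : ∀ ω, ‖F2 ω‖ ≤ 1 := fun ω =>
    norm_unit (mul_nonneg (mul_nonneg (mul_nonneg (he01 ω).1 (hs01 ω).1) (hp01 ω _).1)
      (ind_nonneg _ _))
      (mul_le_one₀ (mul_le_one₀ (mul_le_one₀ (he01 ω).2 (hs01 ω).1 (hs01 ω).2)
        (hp01 ω _).1 (hp01 ω _).2) (ind_nonneg _ _) (ind_le_one _ _))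
  have hF2'b : ∀ ω, ‖F2' ω‖ ≤ 1 := fun ω =>
    norm_unit (mul_nonneg (mul_nonneg (mul_nonneg (he01 ω).1 (hs01 ω).1) (hp01 ω _).1)
      (clip_nonneg _))
      (mul_le_one₀ (mul_le_one₀ (mul_le_one₀ (he01 ω).2 (hs01 ω).1 (hs01 ω).2)
        (hp01 ω _).1 (hp01 ω _).2) (clip_nonneg _) (clip_le_one _))
  have hF3b : ∀ ω, ‖F3 ω‖ ≤ 1 := fun ω =>
    norm_unit (mul_nonneg (mul_nonneg (he01 ω).1 (hs01 ω).1) (hp01 ω _).1)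
      (mul_le_one₀ (mul_le_one₀ (he01 ω).2 (hs01 ω).1 (hs01 ω).2) (hp01 ω _).1 (hp01 ω _).2)
  -- pointwise decomposition
  have hIns : Finset.Icc 1 (n+1) = insert (n+1) (Finset.Icc 1 n) :=
    (Finset.insert_Icc_right_eq_Icc_add_one (by omega)).symm
  have hnotmem : (n+1) ∉ Finset.Icc 1 n := by simp
  have hccase : ∀ ω, n+1 ∈ S ω →
      ((Finset.Icc 1 (n+1)).filter (fun i => i ∈ S ω)).card = cn ω + 1 := by
    intro ω hs
    rw [hIns, Finset.filter_insert, if_pos hs,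
      Finset.card_insert_of_notMem (fun h => hnotmem (Finset.mem_filter.mp h).1)]
  have hccase' : ∀ ω, n+1 ∉ S ω →
      ((Finset.Icc 1 (n+1)).filter (fun i => i ∈ S ω)).card = cn ω := by
    intro ω hs
    rw [hIns, Finset.filter_insert, if_neg hs]
  have hdecomp : ∀ ω,
      ind {ω' | ∀ i ∈ Finset.Icc 1 (n+1), i ∈ S ω' → X i ω' < X 0 ω'} ω *
        clip (X 0 ω) ^ (m - ((Finset.Icc 1 (n+1)).filter (fun i => i ∈ S ω)).card)
      = F1 ω + F2 ω := by
    intro ω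
    have hcond : ω ∈ {ω' | ∀ i ∈ Finset.Icc 1 (n+1), i ∈ S ω' → X i ω' < X 0 ω'} ↔
        ((n+1 ∈ S ω → X (n+1) ω < X 0 ω) ∧ ∀ i ∈ Finset.Icc 1 n, i ∈ S ω → X i ω < X 0 ω) := by
      simp only [Set.mem_setOf_eq, hIns, Finset.forall_mem_insert]
    simp only [hF1def, hF2def]
    by_cases hs : n+1 ∈ S ω
    · have hs1v : s1 ω = 1 := ind_of_mem (show ω ∈ {ω' | n+1 ∈ S ω'} from hs)
      rw [hccase ω hs]
      by_cases he : ∀ i ∈ Finset.Icc 1 n, i ∈ S ω → X i ω < X 0 ω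
      · have hev : e ω = 1 :=
          ind_of_mem (show ω ∈ {ω' | ∀ i ∈ Finset.Icc 1 n, i ∈ S ω' → X i ω' < X 0 ω'} from he)
        by_cases hlt : X (n+1) ω < X 0 ω
        · have hbigv : ind {ω' | ∀ i ∈ Finset.Icc 1 (n+1), i ∈ S ω' → X i ω' < X 0 ω'} ω = 1 :=
            ind_of_mem (hcond.mpr ⟨fun _ => hlt, he⟩)
          have hltv : ind {ω' | X (n+1) ω' < X 0 ω'} ω = 1 :=
            ind_of_mem (show ω ∈ {ω' | X (n+1) ω' < X 0 ω'} from hlt)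
          rw [hbigv, hev, hs1v, hltv,
            show m - (cn ω + 1) = m - cn ω - 1 from (Nat.sub_sub m (cn ω) 1).symm]
          ring
        · have hbigv : ind {ω' | ∀ i ∈ Finset.Icc 1 (n+1), i ∈ S ω' → X i ω' < X 0 ω'} ω = 0 :=
            ind_of_not_mem (fun hm => hlt ((hcond.mp hm).1 hs))
          have hltv : ind {ω' | X (n+1) ω' < X 0 ω'} ω = 0 :=
            ind_of_not_mem (show ω ∉ {ω' | X (n+1) ω' < X 0 ω'} from hlt)
          rw [hbigv, hev, hs1v, hltv]
          ring
      · have hev : e ω = 0 :=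
          ind_of_not_mem (show ω ∉ {ω' | ∀ i ∈ Finset.Icc 1 n, i ∈ S ω' → X i ω' < X 0 ω'} from he)
        have hbigv : ind {ω' | ∀ i ∈ Finset.Icc 1 (n+1), i ∈ S ω' → X i ω' < X 0 ω'} ω = 0 :=
          ind_of_not_mem (fun hm => he ((hcond.mp hm).2))
        rw [hbigv, hev]
        ring
    · have hs1v : s1 ω = 0 := ind_of_not_mem (show ω ∉ {ω' | n+1 ∈ S ω'} from hs)
      rw [hccase' ω hs]
      by_cases he : ∀ i ∈ Finset.Icc 1 n, i ∈ S ω → X i ω < X 0 ω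
      · have hev : e ω = 1 :=
          ind_of_mem (show ω ∈ {ω' | ∀ i ∈ Finset.Icc 1 n, i ∈ S ω' → X i ω' < X 0 ω'} from he)
        have hbigv : ind {ω' | ∀ i ∈ Finset.Icc 1 (n+1), i ∈ S ω' → X i ω' < X 0 ω'} ω = 1 :=
          ind_of_mem (hcond.mpr ⟨fun hmem => absurd hmem hs, he⟩)
        rw [hbigv, hev, hs1v]
        ring
      · have hev : e ω = 0 :=
          ind_of_not_mem (show ω ∉ {ω' | ∀ i ∈ Finset.Icc 1 n, i ∈ S ω' → X i ω' < X 0 ω'} from he)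
        have hbigv : ind {ω' | ∀ i ∈ Finset.Icc 1 (n+1), i ∈ S ω' → X i ω' < X 0 ω'} ω = 0 :=
          ind_of_not_mem (fun hm => he ((hcond.mp hm).2))
        rw [hbigv, hev]
        ring
  -- the chain of equalities
  calc
    (∫ ω, ind {ω' | ∀ i ∈ Finset.Icc 1 (n+1), i ∈ S ω' → X i ω' < X 0 ω'} ω *
        clip (X 0 ω) ^ (m - ((Finset.Icc 1 (n+1)).filter (fun i => i ∈ S ω)).card) ∂P)
      = ∫ ω, F1 ω + F2 ω ∂P :=
        integral_congr_ae (Filter.Eventually.of_forall hdecomp)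
    _ = (∫ ω, F1 ω ∂P) + (∫ ω, F2 ω ∂P) :=
        integral_add (hint F1 hF1meas hF1b) (hint F2 hF2meas hF2b)
    _ = (∫ ω, F1 ω ∂P) + (∫ ω, F2' ω ∂P) := by
        congr 1
        have hL : ∀ ω, F2 ω = G (fun i : ↥(Finset.range (n+1)) => X i ω) *
            ind {ω' | X (n+1) ω' < X 0 ω'} ω := by
          intro ω; rw [hGV ω, hF2def]
        have hR : ∀ ω, F2' ω = G (fun i : ↥(Finset.range (n+1)) => X i ω) * clip (X 0 ω) := by
          intro ω; rw [hGV ω, hF2'def]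
        rw [integral_congr_ae (Filter.Eventually.of_forall hL),
          integral_congr_ae (Filter.Eventually.of_forall hR)]
        exact step_lemma P X hmeas hindep n hunif G hGmeas hGb
    _ = (∫ ω, F1 ω ∂P) + (∫ ω, F3 ω ∂P) := by
        congr 1
        refine integral_congr_ae ?_
        filter_upwards [hcard] with ω hm
        by_cases hs : n+1 ∈ S ω
        · have hsub : (Finset.Icc 1 (n+1)).filter (fun i => i ∈ S ω) ⊆ S ω :=
            fun i hi => (Finset.mem_filter.mp hi).2
          have hc1 : cn ω + 1 ≤ m := by
            calc cn ω + 1 = ((Finset.Icc 1 (n+1)).filter (fun i => i ∈ S ω)).card :=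
                  (hccase ω hs).symm
              _ ≤ (S ω).card := Finset.card_le_card hsub
              _ ≤ m := hm
          have hpow : clip (X 0 ω) ^ (m - cn ω - 1) * clip (X 0 ω) =
              clip (X 0 ω) ^ (m - cn ω) := by
            rw [← pow_succ]
            congr 1
            omega
          simp only [hF2'def, hF3def]
          rw [mul_assoc, hpow]
        · have hs1v : s1 ω = 0 := ind_of_not_mem (show ω ∉ {ω' | n+1 ∈ S ω'} from hs)
          simp only [hF2'def, hF3def, hs1v]
          ring
    _ = ∫ ω, F1 ω + F3 ω ∂P :=
        (integral_add (hint F1 hF1meas hF1b) (hint F3 hF3meas hF3b)).symm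
    _ = ∫ ω, ind {ω' | ∀ i ∈ Finset.Icc 1 n, i ∈ S ω' → X i ω' < X 0 ω'} ω *
        clip (X 0 ω) ^ (m - ((Finset.Icc 1 n).filter (fun i => i ∈ S ω)).card) ∂P := by
        refine integral_congr_ae (Filter.Eventually.of_forall fun ω => ?_)
        simp only [hF1def, hF3def, hedef, hcndef]
        ring

/-- `X_0, X_1, X_2, …` is an infinite sequence of independent
uniform-`[0,1]` random variables, and `S` is a random finite set of positive integers
with `|S| ≤ m` almost surely such that, for every `i ≥ 1`, the event `{i ∈ S}` is
measurable with respect to the σ-algebra generated by `X_1, …, X_{i-1}` (trivial for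
`i = 1`).  Then the probability that `X_0 > X_i` for all `i ∈ S` is at least
`1/(m+1)`. -/
theorem stmt_3
    {Ω : Type*} [MeasurableSpace Ω] (P : Measure Ω) [IsProbabilityMeasure P]
    (m : ℕ) (X : ℕ → Ω → ℝ)
    (hmeas : ∀ i, Measurable (X i))
    (hindep : iIndepFun X P)
    (hunif : ∀ i, Measure.map (X i) P = volume.restrict (Set.Icc (0 : ℝ) 1))
    (S : Ω → Finset ℕ)
    (hpos : ∀ ω, ∀ i ∈ S ω, 1 ≤ i)
    (hcard : ∀ᵐ ω ∂P, (S ω).card ≤ m)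
    (hadapt : ∀ i, 1 ≤ i →
      MeasurableSet[⨆ j ∈ Finset.Ico 1 i, MeasurableSpace.comap (X j) inferInstance]
        {ω | i ∈ S ω}) :
    1 / (m + 1) ≤ P {ω | ∀ i ∈ S ω, X 0 ω > X i ω} := by
  classical
  have hSmeas : ∀ i, MeasurableSet {ω | i ∈ S ω} := by
    intro i
    rcases Nat.eq_zero_or_pos i with h0 | h1
    · subst h0
      have h : {ω | 0 ∈ S ω} = ∅ := by
        ext ω
        simp only [Set.mem_setOf_eq, Set.mem_empty_iff_false, iff_false]
        intro h; exact absurd (hpos ω 0 h) (by norm_num)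
      rw [h]; exact MeasurableSet.empty
    · have hle : (⨆ j ∈ Finset.Ico 1 i, MeasurableSpace.comap (X j) inferInstance :
          MeasurableSpace Ω) ≤ ‹MeasurableSpace Ω› :=
        iSup₂_le fun j _ => measurable_iff_comap_le.mp (hmeas j)
      exact hle _ (hadapt i h1)
  set En : ℕ → Set Ω := fun n => {ω | ∀ i ∈ Finset.Icc 1 n, i ∈ S ω → X i ω < X 0 ω}
    with hEndef
  have hEnmeas : ∀ n, MeasurableSet (En n) := fun n => En_meas X hmeas S hSmeas n
  have key : ∀ n, (∫ ω, ind (En n) ω *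
      clip (X 0 ω) ^ (m - ((Finset.Icc 1 n).filter (fun i => i ∈ S ω)).card) ∂P)
      = ∫ ω, clip (X 0 ω) ^ m ∂P := by
    intro n
    induction n with
    | zero =>
      refine integral_congr_ae (Filter.Eventually.of_forall fun ω => ?_)
      have h1 : ind (En 0) ω = 1 := ind_of_mem
        (show ω ∈ En 0 from fun i hi _ => absurd (Finset.mem_Icc.mp hi) (by omega))
      have h2 : ((Finset.Icc 1 0).filter (fun i => i ∈ S ω)).card = 0 := by simp
      simp only [h1, h2, Nat.sub_zero, one_mul]
    | succ n ih =>
      rw [← ih]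
      exact step_int P m X hmeas hindep S hSmeas hcard hadapt n (hunif (n+1))
  have hval : ∫ ω, clip (X 0 ω) ^ m ∂P = 1/(m+1 : ℝ) := by
    have h1 : ∫ ω, clip (X 0 ω) ^ m ∂P = ∫ x, clip x ^ m ∂(P.map (X 0)) :=
      (integral_map (hmeas 0).aemeasurable
        ((clip_meas.pow_const m).aestronglyMeasurable)).symm
    rw [h1, hunif 0]
    have h2 : ∫ x in Set.Icc (0:ℝ) 1, clip x ^ m = ∫ x in Set.Icc (0:ℝ) 1, x ^ m := by
      refine setIntegral_congr_fun measurableSet_Icc fun x hx => ?_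
      have hc : clip x = x := by
        unfold clip
        rw [min_eq_left hx.2, max_eq_left hx.1]
      rw [hc]
    rw [h2, integral_Icc_eq_integral_Ioc, ← intervalIntegral.integral_of_le zero_le_one,
      integral_pow]
    norm_num
  have hbound : ∀ n, ENNReal.ofReal (1/(m+1 : ℝ)) ≤ P (En n) := by
    intro n
    refine ENNReal.ofReal_le_of_le_toReal ?_
    have hZmeas : Measurable fun ω => ind (En n) ω *
        clip (X 0 ω) ^ (m - ((Finset.Icc 1 n).filter (fun i => i ∈ S ω)).card) :=
      (ind_meas (hEnmeas n)).mul ((clip_meas.comp (hmeas 0)).pow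
        ((measurable_from_nat (f := fun k => m - k)).comp (cn_meas S hSmeas n)))
    have hZb : ∀ ω, ‖ind (En n) ω *
        clip (X 0 ω) ^ (m - ((Finset.Icc 1 n).filter (fun i => i ∈ S ω)).card)‖ ≤ 1 :=
      fun ω => norm_unit
        (mul_nonneg (ind_nonneg _ _) (pow_nonneg (clip_nonneg _) _))
        (mul_le_one₀ (ind_le_one _ _) (pow_nonneg (clip_nonneg _) _)
          (pow_le_one₀ (clip_nonneg _) (clip_le_one _)))
    have h1 : (∫ ω, ind (En n) ω *
        clip (X 0 ω) ^ (m - ((Finset.Icc 1 n).filter (fun i => i ∈ S ω)).card) ∂P)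
        ≤ ∫ ω, ind (En n) ω ∂P := by
      refine integral_mono (integrable_of_bdd hZmeas.aestronglyMeasurable hZb)
        (integrable_of_bdd (ind_meas (hEnmeas n)).aestronglyMeasurable
          (fun ω => norm_unit (ind_nonneg _ _) (ind_le_one _ _))) fun ω => ?_
      calc ind (En n) ω * clip (X 0 ω) ^ (m - ((Finset.Icc 1 n).filter
              (fun i => i ∈ S ω)).card)
          ≤ ind (En n) ω * 1 := by
            refine mul_le_mul_of_nonneg_left ?_ (ind_nonneg _ _)
            exact pow_le_one₀ (clip_nonneg _) (clip_le_one _)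
        _ = ind (En n) ω := mul_one _
    have h2 : ∫ ω, ind (En n) ω ∂P = (P (En n)).toReal :=
      integral_indicator_one (hEnmeas n)
    linarith [key n, hval]
  have hinter : {ω | ∀ i ∈ S ω, X 0 ω > X i ω} = ⋂ n, En n := by
    ext ω
    simp only [Set.mem_setOf_eq, Set.mem_iInter, hEndef]
    constructor
    · intro h n i _ hiS
      exact h i hiS
    · intro h i hiS
      exact h i i (Finset.mem_Icc.mpr ⟨hpos ω i hiS, le_rfl⟩) hiS
  rw [hinter]
  have hanti : Antitone En := by
    intro a b hab ω hω i hi hiS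
    have hi' := Finset.mem_Icc.mp hi
    exact hω i (Finset.mem_Icc.mpr ⟨hi'.1, le_trans hi'.2 hab⟩) hiS
  rw [Directed.measure_iInter (fun n => (hEnmeas n).nullMeasurableSet) hanti.directed_ge
    ⟨0, measure_ne_top P _⟩]
  refine le_iInf fun n => ?_
  refine le_trans (le_of_eq ?_) (hbound n)
  rw [ENNReal.ofReal_div_of_pos (by positivity), ENNReal.ofReal_one,
    ENNReal.ofReal_add (by positivity) zero_le_one, ENNReal.ofReal_natCast, ENNReal.ofReal_one]
end

section
/- Let m be a natural number, let x ∈ [0,1], and let X_1, X_2, ... be an infinite sequence of independent random variables on a probability space, each uniformly distributed on the unit interval [0,1]. Let S be a random finite subset of the positive integers such that (a) |S| ≤ m almost surely, and (b) for every i ≥ 1, the event {i ∈ S} is measurable with respect to the σ-algebra generated by X_1, ..., X_{i-1} (for i = 1, this σ-algebra is trivial). Then the probability of the event {for all i ∈ S, X_i < x} is at least x^m. -/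
open MeasureTheory ProbabilityTheory
open scoped ENNReal

namespace Stmt4Aux

variable {Ω : Type*} [mΩ : MeasurableSpace Ω]

/-- the positive natural `n+1` -/
def pn (n : ℕ) : ℕ+ := ⟨n + 1, Nat.succ_pos n⟩

@[simp] lemma pn_coe (n : ℕ) : ((pn n : ℕ+) : ℕ) = n + 1 := rfl

/-- number of elements of `S ω` that are `≤ n` -/
def cnt (S : Ω → Finset ℕ+) (n : ℕ) (ω : Ω) : ℕ :=
  ((S ω).filter (fun i : ℕ+ => (i : ℕ) ≤ n)).card

/-- the event that all revealed (index `≤ n`) members of `S` have priority `< x` -/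
def Dset (S : Ω → Finset ℕ+) (X : ℕ+ → Ω → ℝ) (x : ℝ) (n : ℕ) : Set Ω :=
  {ω | ∀ i ∈ S ω, (i : ℕ) ≤ n → X i ω < x}

/-- the martingale-like sequence -/
noncomputable def f (S : Ω → Finset ℕ+) (X : ℕ+ → Ω → ℝ) (x : ℝ) (m n : ℕ) : Ω → ℝ≥0∞ :=
  fun ω => (Dset S X x n).indicator
    (fun ω' => (ENNReal.ofReal x) ^ (m - min (cnt S n ω') m)) ω

/-- the filtration -/
def Fn (X : ℕ+ → Ω → ℝ) (n : ℕ) : MeasurableSpace Ω :=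
  ⨆ j : ℕ+, ⨆ _ : (j : ℕ) ≤ n, MeasurableSpace.comap (X j) inferInstance

lemma cnt_zero (S : Ω → Finset ℕ+) (ω : Ω) : cnt S 0 ω = 0 := by
  unfold cnt
  rw [Finset.filter_false_of_mem, Finset.card_empty]
  exact fun i _ => Nat.not_le.mpr i.pos

lemma cnt_succ (S : Ω → Finset ℕ+) (n : ℕ) (ω : Ω) :
    cnt S (n + 1) ω = cnt S n ω + (if pn n ∈ S ω then 1 else 0) := by
  unfold cnt
  have h1 : ((S ω).filter (fun i : ℕ+ => (i : ℕ) ≤ n + 1))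
      = ((S ω).filter (fun i : ℕ+ => (i : ℕ) ≤ n)) ∪ ((S ω).filter (fun i : ℕ+ => i = pn n)) := by
    ext a
    simp only [Finset.mem_union, Finset.mem_filter]
    constructor
    · rintro ⟨ha, hle⟩
      by_cases h' : (a : ℕ) ≤ n
      · exact Or.inl ⟨ha, h'⟩
      · refine Or.inr ⟨ha, ?_⟩
        have : (a : ℕ) = n + 1 := le_antisymm hle (Nat.not_le.mp h')
        exact PNat.coe_inj.mp (by rw [this, pn_coe])
    · rintro (⟨ha, h⟩ | ⟨ha, rfl⟩)
      · exact ⟨ha, h.trans (Nat.le_succ n)⟩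
      · exact ⟨ha, le_rfl⟩
  have h2 : Disjoint ((S ω).filter (fun i : ℕ+ => (i : ℕ) ≤ n))
      ((S ω).filter (fun i : ℕ+ => i = pn n)) := by
    rw [Finset.disjoint_left]
    intro a ha hb
    have ha' := (Finset.mem_filter.mp ha).2
    have hb' := (Finset.mem_filter.mp hb).2
    rw [hb'] at ha'
    exact Nat.not_succ_le_self n ha'
  rw [h1, Finset.card_union_of_disjoint h2, Finset.filter_eq']
  by_cases hmem : pn n ∈ S ω <;> simp [hmem]

lemma Dset_zero (S : Ω → Finset ℕ+) (X : ℕ+ → Ω → ℝ) (x : ℝ) :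
    Dset S X x 0 = Set.univ :=
  Set.eq_univ_iff_forall.mpr (fun _ i _ h => absurd h (Nat.not_le.mpr i.pos))

lemma Dset_succ (S : Ω → Finset ℕ+) (X : ℕ+ → Ω → ℝ) (x : ℝ) (n : ℕ) :
    Dset S X x (n + 1) = Dset S X x n ∩ {ω | pn n ∈ S ω → X (pn n) ω < x} := by
  ext ω
  constructor
  · intro h
    exact ⟨fun i hi hle => h i hi (hle.trans (Nat.le_succ n)), fun hmem => h _ hmem le_rfl⟩
  · rintro ⟨h1, h2⟩ i hi hle
    by_cases h' : (i : ℕ) ≤ n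
    · exact h1 i hi h'
    · have hieq : i = pn n := by
        have : (i : ℕ) = n + 1 := le_antisymm hle (Nat.not_le.mp h')
        exact PNat.coe_inj.mp (by rw [this, pn_coe])
      rw [hieq]
      exact h2 (by rwa [hieq] at hi)

lemma Fn_le (X : ℕ+ → Ω → ℝ) (hmeas : ∀ i, Measurable (X i)) (n : ℕ) :
    Fn X n ≤ mΩ :=
  iSup₂_le fun j _ => (hmeas j).comap_le

lemma Fn_mono (X : ℕ+ → Ω → ℝ) {n n' : ℕ} (h : n ≤ n') : Fn X n ≤ Fn X n' := by
  refine iSup₂_le fun j hj => ?_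
  exact le_trans
    (le_iSup (fun _ : (j : ℕ) ≤ n' => MeasurableSpace.comap (X j) inferInstance) (hj.trans h))
    (le_iSup (fun j : ℕ+ => ⨆ _ : (j : ℕ) ≤ n', MeasurableSpace.comap (X j) inferInstance) j)

lemma memS_mble (X : ℕ+ → Ω → ℝ) (S : Ω → Finset ℕ+)
    (hadapt : ∀ i : ℕ+,
      MeasurableSet[⨆ j : ℕ+, ⨆ _ : j < i, MeasurableSpace.comap (X j) inferInstance]
        {ω | i ∈ S ω})
    {n : ℕ} {i : ℕ+} (hi : (i : ℕ) ≤ n + 1) :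
    MeasurableSet[Fn X n] {ω | i ∈ S ω} := by
  have hle : (⨆ j : ℕ+, ⨆ _ : j < i, MeasurableSpace.comap (X j) inferInstance) ≤ Fn X n := by
    refine iSup₂_le fun j hj => ?_
    have hj2 : (j : ℕ) < (i : ℕ) := (PNat.coe_lt_coe j i).mpr hj
    have hj' : (j : ℕ) ≤ n := by omega
    exact le_trans
      (le_iSup (fun _ : (j : ℕ) ≤ n => MeasurableSpace.comap (X j) inferInstance) hj')
      (le_iSup (fun j : ℕ+ => ⨆ _ : (j : ℕ) ≤ n, MeasurableSpace.comap (X j) inferInstance) j)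
  exact hle _ (hadapt i)

lemma Xlt_mble (X : ℕ+ → Ω → ℝ) (x : ℝ) {n : ℕ} {j : ℕ+} (hj : (j : ℕ) ≤ n) :
    MeasurableSet[Fn X n] {ω | X j ω < x} := by
  have h1 : MeasurableSet[MeasurableSpace.comap (X j) inferInstance] {ω | X j ω < x} :=
    ⟨Set.Iio x, measurableSet_Iio, rfl⟩
  have hle : MeasurableSpace.comap (X j) inferInstance ≤ Fn X n :=
    le_trans
      (le_iSup (fun _ : (j : ℕ) ≤ n => MeasurableSpace.comap (X j) inferInstance) hj)
      (le_iSup (fun j : ℕ+ => ⨆ _ : (j : ℕ) ≤ n, MeasurableSpace.comap (X j) inferInstance) j)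
  exact hle _ h1

lemma cnt_mble (X : ℕ+ → Ω → ℝ) (S : Ω → Finset ℕ+)
    (hadapt : ∀ i : ℕ+,
      MeasurableSet[⨆ j : ℕ+, ⨆ _ : j < i, MeasurableSpace.comap (X j) inferInstance]
        {ω | i ∈ S ω}) :
    ∀ n, Measurable[Fn X n] (cnt S n) := by
  intro n
  induction n with
  | zero =>
    have : cnt S 0 = fun _ => 0 := funext (cnt_zero S)
    rw [this]; exact measurable_const
  | succ k ih =>
    have hstep : cnt S (k + 1) = fun ω => cnt S k ω
        + ({ω : Ω | pn k ∈ S ω}).indicator (fun _ => 1) ω := by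
      funext ω
      rw [cnt_succ]
      congr 1
      by_cases h : pn k ∈ S ω <;> simp [h]
    rw [hstep]
    have hB : MeasurableSet[Fn X (k + 1)] {ω : Ω | pn k ∈ S ω} :=
      memS_mble X S hadapt (by simp)
    exact Measurable.add (ih.mono (Fn_mono X (Nat.le_succ k)) le_rfl)
      (measurable_const.indicator hB)

lemma Dset_mble (X : ℕ+ → Ω → ℝ) (S : Ω → Finset ℕ+) (x : ℝ)
    (hmeas : ∀ i, Measurable (X i))
    (hadapt : ∀ i : ℕ+,
      MeasurableSet[⨆ j : ℕ+, ⨆ _ : j < i, MeasurableSpace.comap (X j) inferInstance]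
        {ω | i ∈ S ω}) :
    ∀ n, MeasurableSet[Fn X n] (Dset S X x n) := by
  intro n
  induction n with
  | zero => rw [Dset_zero]; exact MeasurableSet.univ
  | succ k ih =>
    rw [Dset_succ]
    have h2 : {ω : Ω | pn k ∈ S ω → X (pn k) ω < x}
        = {ω : Ω | pn k ∈ S ω}ᶜ ∪ {ω : Ω | X (pn k) ω < x} := by
      ext ω
      simp only [Set.mem_setOf_eq, Set.mem_union, Set.mem_compl_iff]
      exact imp_iff_not_or
    refine MeasurableSet.inter (Fn_mono X (Nat.le_succ k) _ ih) ?_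
    rw [h2]
    exact ((memS_mble X S hadapt (by simp)).compl).union (Xlt_mble X x (by simp))

lemma f_mble (X : ℕ+ → Ω → ℝ) (S : Ω → Finset ℕ+) (x : ℝ) (m : ℕ)
    (hmeas : ∀ i, Measurable (X i))
    (hadapt : ∀ i : ℕ+,
      MeasurableSet[⨆ j : ℕ+, ⨆ _ : j < i, MeasurableSpace.comap (X j) inferInstance]
        {ω | i ∈ S ω})
    (n : ℕ) : Measurable[Fn X n] (f S X x m n) := by
  have h1 : Measurable[Fn X n]
      (fun ω => (ENNReal.ofReal x) ^ (m - min (cnt S n ω) m)) := by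
    exact (measurable_from_top
      (f := fun k : ℕ => (ENNReal.ofReal x) ^ (m - min k m))).comp (cnt_mble X S hadapt n)
  exact h1.indicator (Dset_mble X S x hmeas hadapt n)

lemma indep_mono {P : Measure Ω} {m₁ m₂ m₁' m₂' : MeasurableSpace Ω}
    (h : Indep m₁ m₂ P) (h1 : m₁' ≤ m₁) (h2 : m₂' ≤ m₂) : Indep m₁' m₂' P :=
  indep_of_indep_of_le_right (indep_of_indep_of_le_left h h1) h2

end Stmt4Aux

open Stmt4Aux

/-- `x ∈ [0,1]` is fixed, `X_1, X_2, …` (indexed by the positive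
integers) is an infinite sequence of independent uniform-`[0,1]` random variables,
and `S` is a random finite set of positive integers with `|S| ≤ m` almost surely such
that, for every `i ≥ 1`, the event `{i ∈ S}` is measurable with respect to the
σ-algebra generated by `X_1, …, X_{i-1}` (trivial for `i = 1`).  Then the probability
that `X_i < x` for all `i ∈ S` is at least `x^m`. -/
theorem stmt_4
    {Ω : Type*} [MeasurableSpace Ω] (P : Measure Ω) [IsProbabilityMeasure P]
    (m : ℕ) (x : ℝ) (hx : x ∈ Set.Icc (0 : ℝ) 1)
    (X : ℕ+ → Ω → ℝ)
    (hmeas : ∀ i, Measurable (X i))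
    (hindep : iIndepFun X P)
    (hunif : ∀ i, Measure.map (X i) P = volume.restrict (Set.Icc (0 : ℝ) 1))
    (S : Ω → Finset ℕ+)
    (hcard : ∀ᵐ ω ∂P, (S ω).card ≤ m)
    (hadapt : ∀ i : ℕ+,
      MeasurableSet[⨆ j : ℕ+, ⨆ _ : j < i, MeasurableSpace.comap (X j) inferInstance]
        {ω | i ∈ S ω}) :
    ENNReal.ofReal (x ^ m) ≤ P {ω | ∀ i ∈ S ω, X i ω < x} := by
  set y : ℝ≥0∞ := ENNReal.ofReal x with hy
  have hy1 : y ≤ 1 := ENNReal.ofReal_le_one.mpr hx.2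
  -- each f n is measurable (ambient)
  have hfm : ∀ n, Measurable (f S X x m n) :=
    fun n => (f_mble X S x m hmeas hadapt n).mono (Fn_le X hmeas n) le_rfl
  -- Step: the integral of f is constant in n
  have hstep : ∀ n : ℕ, ∫⁻ ω, f S X x m (n + 1) ω ∂P = ∫⁻ ω, f S X x m n ω ∂P := by
    intro n
    set B : Set Ω := {ω | pn n ∈ S ω} with hBdef
    have hBF : MeasurableSet[Fn X n] B := memS_mble X S hadapt (by simp)
    have hBamb : MeasurableSet B := Fn_le X hmeas n _ hBF
    set g : Ω → ℝ≥0∞ := fun ω => (B ∩ Dset S X x n).indicator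
      (fun ω' => y ^ (m - min (cnt S n ω' + 1) m)) ω with hgdef
    set h : Ω → ℝ≥0∞ := fun ω => (X (pn n) ⁻¹' Set.Iio x).indicator (1 : Ω → ℝ≥0∞) ω with hhdef
    have hgF : Measurable[Fn X n] g := by
      have h1 : Measurable[Fn X n]
          (fun ω => y ^ (m - min (cnt S n ω + 1) m)) :=
        (measurable_from_top
          (f := fun k : ℕ => y ^ (m - min (k + 1) m))).comp (cnt_mble X S hadapt n)
      exact h1.indicator (hBF.inter (Dset_mble X S x hmeas hadapt n))
    have hgamb : Measurable g := hgF.mono (Fn_le X hmeas n) le_rfl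
    have hhC : Measurable[MeasurableSpace.comap (X (pn n)) inferInstance] h :=
      measurable_const.indicator ⟨Set.Iio x, measurableSet_Iio, rfl⟩
    have hhamb : Measurable h :=
      measurable_const.indicator ((hmeas (pn n)) measurableSet_Iio)
    -- independence
    have hIndep : Indep (Fn X n) (MeasurableSpace.comap (X (pn n)) inferInstance) P := by
      have hbig := indep_iSup_of_disjoint (μ := P)
        (m := fun i : ℕ+ => MeasurableSpace.comap (X i) inferInstance)
        (fun i => (hmeas i).comap_le) hindep
        (S := {j : ℕ+ | (j : ℕ) ≤ n}) (T := {pn n})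
        (by
          rw [Set.disjoint_left]
          rintro a ha hb
          rw [Set.mem_singleton_iff] at hb
          subst hb
          exact Nat.not_succ_le_self n ha)
      refine indep_mono hbig ?_ ?_
      · exact iSup₂_le fun j hj =>
          le_iSup₂ (f := fun (i : ℕ+) (_ : i ∈ {j : ℕ+ | (j : ℕ) ≤ n}) =>
            MeasurableSpace.comap (X i) inferInstance) j hj
      · exact le_iSup₂ (f := fun (i : ℕ+) (_ : i ∈ ({pn n} : Set ℕ+)) =>
          MeasurableSpace.comap (X i) inferInstance) (pn n) rfl
    -- ∫ h = y
    have hinth : ∫⁻ ω, h ω ∂P = y := by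
      rw [hhdef]
      rw [lintegral_indicator_one ((hmeas (pn n)) measurableSet_Iio)]
      rw [← Measure.map_apply (hmeas (pn n)) measurableSet_Iio, hunif,
        Measure.restrict_apply measurableSet_Iio]
      have hset : Set.Iio x ∩ Set.Icc (0 : ℝ) 1 = Set.Ico 0 x := by
        ext t
        simp only [Set.mem_inter_iff, Set.mem_Iio, Set.mem_Icc, Set.mem_Ico]
        constructor
        · rintro ⟨h1, h2, _⟩; exact ⟨h2, h1⟩
        · rintro ⟨h1, h2⟩; exact ⟨h2, h1, le_trans (le_of_lt h2) hx.2⟩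
      rw [hset, Real.volume_Ico, sub_zero]
    -- first a.e. identity
    have hae1 : f S X x m (n + 1) =ᵐ[P]
        fun ω => g ω * h ω + Set.indicator Bᶜ (f S X x m n) ω := by
      refine hcard.mono (fun ω hω => ?_)
      show f S X x m (n + 1) ω = g ω * h ω + Set.indicator Bᶜ (f S X x m n) ω
      by_cases hmemB : pn n ∈ S ω
      · have hc1 : cnt S (n + 1) ω = cnt S n ω + 1 := by
          rw [cnt_succ]; simp [hmemB]
        have hlt : cnt S n ω < m := by
          have hss : (S ω).filter (fun i : ℕ+ => (i : ℕ) ≤ n) ⊂ S ω := by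
            refine (Finset.ssubset_iff_of_subset (Finset.filter_subset _ _)).mpr
              ⟨pn n, hmemB, fun hc => ?_⟩
            exact Nat.not_succ_le_self n (Finset.mem_filter.mp hc).2
          exact lt_of_lt_of_le (Finset.card_lt_card hss) hω
        have hBc : ω ∉ Bᶜ := fun hc => hc hmemB
        rw [Set.indicator_of_notMem (show ω ∉ Bᶜ from hBc), add_zero]
        by_cases hD : ω ∈ Dset S X x n
        · by_cases hX : X (pn n) ω < x
          · have hDs : ω ∈ Dset S X x (n + 1) := by
              rw [Dset_succ]; exact ⟨hD, fun _ => hX⟩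
            have hhval : h ω = 1 :=
              Set.indicator_of_mem (show ω ∈ X (pn n) ⁻¹' Set.Iio x from hX) _
            have hgval : g ω = y ^ (m - min (cnt S n ω + 1) m) :=
              Set.indicator_of_mem (show ω ∈ B ∩ Dset S X x n from ⟨hmemB, hD⟩) _
            show (Dset S X x (n+1)).indicator
              (fun ω' => y ^ (m - min (cnt S (n+1) ω') m)) ω = g ω * h ω
            rw [Set.indicator_of_mem hDs, hhval, hgval, mul_one, hc1]
          · have hDs : ω ∉ Dset S X x (n + 1) := by
              rw [Dset_succ]
              rintro ⟨-, h2⟩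
              exact hX (h2 hmemB)
            have hhval : h ω = 0 :=
              Set.indicator_of_notMem (show ω ∉ X (pn n) ⁻¹' Set.Iio x from hX) _
            show (Dset S X x (n+1)).indicator
              (fun ω' => y ^ (m - min (cnt S (n+1) ω') m)) ω = g ω * h ω
            rw [Set.indicator_of_notMem hDs, hhval, mul_zero]
        · have hDs : ω ∉ Dset S X x (n + 1) := by
            rw [Dset_succ]
            rintro ⟨h1, -⟩
            exact hD h1
          have hgval : g ω = 0 :=
            Set.indicator_of_notMem (show ω ∉ B ∩ Dset S X x n from fun hc => hD hc.2) _
          show (Dset S X x (n+1)).indicator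
            (fun ω' => y ^ (m - min (cnt S (n+1) ω') m)) ω = g ω * h ω
          rw [Set.indicator_of_notMem hDs, hgval, zero_mul]
      · have hc1 : cnt S (n + 1) ω = cnt S n ω := by
          rw [cnt_succ]; simp [hmemB]
        have hgval : g ω = 0 :=
          Set.indicator_of_notMem (show ω ∉ B ∩ Dset S X x n from fun hc => hmemB hc.1) _
        have hBc : ω ∈ Bᶜ := hmemB
        have hDiff : ω ∈ Dset S X x (n + 1) ↔ ω ∈ Dset S X x n := by
          rw [Dset_succ]
          exact ⟨fun hc => hc.1, fun hc => ⟨hc, fun hm => absurd hm hmemB⟩⟩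
        show (Dset S X x (n+1)).indicator
          (fun ω' => y ^ (m - min (cnt S (n+1) ω') m)) ω
          = g ω * h ω + Set.indicator Bᶜ (f S X x m n) ω
        rw [hgval, zero_mul, zero_add,
          Set.indicator_of_mem (show ω ∈ Bᶜ from hBc)]
        by_cases hD : ω ∈ Dset S X x n
        · rw [Set.indicator_of_mem (hDiff.mpr hD), hc1]
          show y ^ (m - min (cnt S n ω) m)
            = (Dset S X x n).indicator (fun ω' => y ^ (m - min (cnt S n ω') m)) ω
          rw [Set.indicator_of_mem hD]
        · rw [Set.indicator_of_notMem (fun hc => hD (hDiff.mp hc))]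
          show (0 : ℝ≥0∞)
            = (Dset S X x n).indicator (fun ω' => y ^ (m - min (cnt S n ω') m)) ω
          rw [Set.indicator_of_notMem hD]
    -- second a.e. identity
    have hae2 : Set.indicator B (f S X x m n) =ᵐ[P] fun ω => g ω * y := by
      refine hcard.mono (fun ω hω => ?_)
      show Set.indicator B (f S X x m n) ω = g ω * y
      by_cases hmemB : pn n ∈ S ω
      · have hlt : cnt S n ω < m := by
          have hss : (S ω).filter (fun i : ℕ+ => (i : ℕ) ≤ n) ⊂ S ω := by
            refine (Finset.ssubset_iff_of_subset (Finset.filter_subset _ _)).mpr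
              ⟨pn n, hmemB, fun hc => ?_⟩
            exact Nat.not_succ_le_self n (Finset.mem_filter.mp hc).2
          exact lt_of_lt_of_le (Finset.card_lt_card hss) hω
        rw [Set.indicator_of_mem (show ω ∈ B from hmemB)]
        by_cases hD : ω ∈ Dset S X x n
        · have hgval : g ω = y ^ (m - min (cnt S n ω + 1) m) :=
            Set.indicator_of_mem (show ω ∈ B ∩ Dset S X x n from ⟨hmemB, hD⟩) _
          show (Dset S X x n).indicator
            (fun ω' => y ^ (m - min (cnt S n ω') m)) ω = g ω * y
          rw [Set.indicator_of_mem hD, hgval]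
          rw [min_eq_left (le_of_lt hlt), min_eq_left (Nat.succ_le_of_lt hlt)]
          have hexp : m - cnt S n ω = (m - (cnt S n ω + 1)) + 1 := by omega
          rw [hexp, pow_succ]
        · have hgval : g ω = 0 := Set.indicator_of_notMem (fun hc => hD hc.2) _
          show (Dset S X x n).indicator
            (fun ω' => y ^ (m - min (cnt S n ω') m)) ω = g ω * y
          rw [Set.indicator_of_notMem hD, hgval, zero_mul]
      · have hgval : g ω = 0 :=
          Set.indicator_of_notMem (show ω ∉ B ∩ Dset S X x n from fun hc => hmemB hc.1) _
        rw [Set.indicator_of_notMem (show ω ∉ B from hmemB), hgval, zero_mul]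
    calc ∫⁻ ω, f S X x m (n + 1) ω ∂P
        = ∫⁻ ω, (g ω * h ω + Set.indicator Bᶜ (f S X x m n) ω) ∂P :=
          lintegral_congr_ae hae1
      _ = (∫⁻ ω, g ω * h ω ∂P) + ∫⁻ ω, Set.indicator Bᶜ (f S X x m n) ω ∂P :=
          lintegral_add_left (hgamb.mul hhamb) _
      _ = (∫⁻ ω, g ω ∂P) * (∫⁻ ω, h ω ∂P)
            + ∫⁻ ω, Set.indicator Bᶜ (f S X x m n) ω ∂P := by
          rw [lintegral_mul_eq_lintegral_mul_lintegral_of_independent_measurableSpace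
            (Fn_le X hmeas n) ((hmeas (pn n)).comap_le) hIndep hgF hhC]
      _ = (∫⁻ ω, g ω ∂P) * y + ∫⁻ ω, Set.indicator Bᶜ (f S X x m n) ω ∂P := by
          rw [hinth]
      _ = (∫⁻ ω, g ω * y ∂P) + ∫⁻ ω, Set.indicator Bᶜ (f S X x m n) ω ∂P := by
          rw [lintegral_mul_const y hgamb]
      _ = (∫⁻ ω, Set.indicator B (f S X x m n) ω ∂P)
            + ∫⁻ ω, Set.indicator Bᶜ (f S X x m n) ω ∂P := by
          rw [lintegral_congr_ae hae2]
      _ = ∫⁻ ω, (Set.indicator B (f S X x m n) ω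
            + Set.indicator Bᶜ (f S X x m n) ω) ∂P :=
          (lintegral_add_left ((hfm n).indicator hBamb) _).symm
      _ = ∫⁻ ω, f S X x m n ω ∂P := by
          refine lintegral_congr (fun ω => ?_)
          have := congrFun (Set.indicator_self_add_compl B (f S X x m n)) ω
          simpa using this
  -- base case
  have hbase : ∫⁻ ω, f S X x m 0 ω ∂P = y ^ m := by
    have hfeq : f S X x m 0 = fun _ => y ^ m := by
      funext ω
      rw [f, Dset_zero, Set.indicator_univ, cnt_zero]
      simp [hy]
    rw [hfeq, lintegral_const, measure_univ, mul_one]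
  have hint : ∀ n, ∫⁻ ω, f S X x m n ω ∂P = y ^ m := by
    intro n
    induction n with
    | zero => exact hbase
    | succ k ih => rw [hstep k]; exact ih
  -- the limit function
  set F : Ω → ℝ≥0∞ := fun ω => ({ω : Ω | ∀ i ∈ S ω, X i ω < x}).indicator
    (fun ω' => y ^ (m - min ((S ω').card) m)) ω with hFdef
  have hconv : ∀ ω, Filter.Tendsto (fun n => f S X x m n ω) Filter.atTop (nhds (F ω)) := by
    intro ω
    refine Filter.Tendsto.congr' ?_
      (tendsto_const_nhds : Filter.Tendsto (fun _ : ℕ => F ω) Filter.atTop (nhds (F ω)))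
    rw [Filter.EventuallyEq, Filter.eventually_atTop]
    refine ⟨(S ω).sup (fun i : ℕ+ => (i : ℕ)), fun n hn => ?_⟩
    have hfilter : (S ω).filter (fun i : ℕ+ => (i : ℕ) ≤ n) = S ω :=
      Finset.filter_true_of_mem
        (fun i hi => le_trans (Finset.le_sup (f := fun i : ℕ+ => (i : ℕ)) hi) hn)
    have hDeq : ω ∈ Dset S X x n ↔ ω ∈ {ω : Ω | ∀ i ∈ S ω, X i ω < x} :=
      ⟨fun hc i hi => hc i hi (le_trans (Finset.le_sup (f := fun i : ℕ+ => (i : ℕ)) hi) hn),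
       fun hc i hi _ => hc i hi⟩
    show ({ω : Ω | ∀ i ∈ S ω, X i ω < x}).indicator
        (fun ω' => y ^ (m - min ((S ω').card) m)) ω
      = (Dset S X x n).indicator
        (fun ω' => y ^ (m - min (cnt S n ω') m)) ω
    by_cases hD : ω ∈ {ω : Ω | ∀ i ∈ S ω, X i ω < x}
    · rw [Set.indicator_of_mem hD, Set.indicator_of_mem (hDeq.mpr hD)]
      unfold cnt
      rw [hfilter]
    · rw [Set.indicator_of_notMem hD,
        Set.indicator_of_notMem (fun hc => hD (hDeq.mp hc))]
  have hf_le_one : ∀ n ω, f S X x m n ω ≤ 1 := by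
    intro n ω
    refine le_trans (Set.indicator_le_self _ _ ω) ?_
    exact pow_le_one' hy1 _
  have hlim := tendsto_lintegral_of_dominated_convergence (μ := P)
    (F := fun n => f S X x m n) (f := F) (fun _ => 1) hfm
    (fun n => Filter.Eventually.of_forall (fun ω => hf_le_one n ω))
    (by rw [lintegral_one, measure_univ]; exact ENNReal.one_ne_top)
    (Filter.Eventually.of_forall hconv)
  simp only [hint] at hlim
  have hFint : ∫⁻ ω, F ω ∂P = y ^ m :=
    tendsto_nhds_unique hlim tendsto_const_nhds
  -- event measurability
  have hSamb : ∀ i : ℕ+, MeasurableSet {ω | i ∈ S ω} := by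
    intro i
    have hle : (⨆ j : ℕ+, ⨆ _ : j < i, MeasurableSpace.comap (X j) inferInstance)
        ≤ ‹MeasurableSpace Ω› := iSup₂_le fun j _ => (hmeas j).comap_le
    exact hle _ (hadapt i)
  have hEvMeas : MeasurableSet {ω : Ω | ∀ i ∈ S ω, X i ω < x} := by
    have heq : {ω : Ω | ∀ i ∈ S ω, X i ω < x}
        = ⋂ i : ℕ+, ({ω : Ω | i ∈ S ω}ᶜ ∪ {ω : Ω | X i ω < x}) := by
      ext ω
      simp only [Set.mem_setOf_eq, Set.mem_iInter, Set.mem_union, Set.mem_compl_iff]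
      constructor
      · intro hc i
        by_cases hi : i ∈ S ω
        · exact Or.inr (hc i hi)
        · exact Or.inl hi
      · intro hc i hi
        rcases hc i with h' | h'
        · exact absurd hi h'
        · exact h'
    rw [heq]
    exact MeasurableSet.iInter
      (fun i => ((hSamb i).compl).union ((hmeas i) measurableSet_Iio))
  have hfinal : ∫⁻ ω, F ω ∂P ≤ P {ω : Ω | ∀ i ∈ S ω, X i ω < x} := by
    calc ∫⁻ ω, F ω ∂P
        ≤ ∫⁻ ω, ({ω : Ω | ∀ i ∈ S ω, X i ω < x}).indicator (fun _ => 1) ω ∂P := by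
          refine lintegral_mono (fun ω => ?_)
          exact Set.indicator_le_indicator (pow_le_one' hy1 _)
      _ = P {ω : Ω | ∀ i ∈ S ω, X i ω < x} := lintegral_indicator_one hEvMeas
  rw [ENNReal.ofReal_pow hx.1]
  rw [← hFint]
  exact hfinal
end

section
/- Let G be a finite simple graph and let (X_v), indexed by the vertices v of G, be independent random variables on a probability space, each uniformly distributed on the unit interval [0,1]. Call a vertex v a strict local maximum if X_v > X_u for every neighbor u of v. Then the expected number of strict local maxima equals the sum over all vertices v of 1/(deg(v)+1), where deg(v) denotes the degree of v in G. In particular, if G is d-regular with n vertices, the expected number of strict local maxima is n/(d+1). -/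
open MeasureTheory ProbabilityTheory
open scoped ENNReal

lemma aux_int (k : ℕ) :
    ∫⁻ t in Set.Icc (0:ℝ) 1, ENNReal.ofReal t ^ k
      = 1 / ((k : ℝ≥0∞) + 1) := by
  have h1 : ∀ t ∈ Set.Icc (0:ℝ) 1, ENNReal.ofReal t ^ k = ENNReal.ofReal (t ^ k) := by
    intro t ht
    rw [ENNReal.ofReal_pow ht.1]
  rw [setLIntegral_congr_fun measurableSet_Icc h1]
  rw [← ofReal_integral_eq_lintegral_ofReal]
  · rw [integral_Icc_eq_integral_Ioc, ← intervalIntegral.integral_of_le (by norm_num : (0:ℝ) ≤ 1),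
      integral_pow]
    simp only [one_pow, ne_eq, Nat.cast_add, Nat.cast_one, zero_pow (Nat.succ_ne_zero k)]
    rw [ENNReal.ofReal_div_of_pos (by positivity)]
    congr 1
    · simp
    · rw [ENNReal.ofReal_add (by positivity) zero_le_one]
      simp
  · exact (continuous_pow k).continuousOn.integrableOn_compact isCompact_Icc
  · exact ae_restrict_of_forall_mem measurableSet_Icc fun t ht => by
      have := ht.1; positivity

lemma aux_prob
    {Ω : Type*} [MeasurableSpace Ω] (P : Measure Ω) [IsProbabilityMeasure P]
    {V : Type*} [Fintype V] (G : SimpleGraph V) [DecidableRel G.Adj]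
    (X : V → Ω → ℝ)
    (hmeas : ∀ v, Measurable (X v))
    (hindep : iIndepFun X P)
    (hunif : ∀ v, Measure.map (X v) P = volume.restrict (Set.Icc (0 : ℝ) 1))
    (v : V) :
    P {ω | ∀ u, G.Adj v u → X v ω > X u ω} = 1 / ((G.degree v : ℝ≥0∞) + 1) := by
  classical
  set s : Finset V := G.neighborFinset v with hs
  set k : ℕ := s.card with hk
  have hdeg : G.degree v = k := rfl
  -- the tuple of neighbor values
  set Y : Ω → (s → ℝ) := fun ω u => X u.1 ω with hY
  have hYmeas : Measurable Y := measurable_pi_lambda _ fun u => hmeas u.1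
  have hvs : v ∉ s := by simp [hs]
  -- independence of X v and Y
  have hIndep : IndepFun (X v) Y P := by
    have h := hindep.indepFun_finset {v} s (by simpa using hvs) hmeas
    exact h.comp (φ := fun f : ({v} : Finset V) → ℝ => f ⟨v, Finset.mem_singleton_self v⟩)
      (ψ := id) (measurable_pi_apply _) measurable_id
  -- the event as preimage
  have hEvent : {ω | ∀ u, G.Adj v u → X v ω > X u ω}
      = (fun ω => (X v ω, Y ω)) ⁻¹' {p : ℝ × (s → ℝ) | ∀ u : s, p.2 u < p.1} := by
    ext ω
    simp only [Set.mem_setOf_eq, Set.mem_preimage, gt_iff_lt]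
    constructor
    · intro h u; exact h u.1 ((G.mem_neighborFinset v u.1).mp u.2)
    · intro h u hu; exact h ⟨u, (G.mem_neighborFinset v u).mpr hu⟩
  have hEmeas : MeasurableSet {p : ℝ × (s → ℝ) | ∀ u : s, p.2 u < p.1} := by
    have : {p : ℝ × (s → ℝ) | ∀ u : s, p.2 u < p.1}
        = ⋂ u : s, {p : ℝ × (s → ℝ) | p.2 u < p.1} := by ext p; simp
    rw [this]
    exact MeasurableSet.iInter fun u =>
      measurableSet_lt (measurable_snd.eval) measurable_fst
  -- joint law is product
  have hprod : Measure.map (fun ω => (X v ω, Y ω)) P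
      = (Measure.map (X v) P).prod (Measure.map Y P) :=
    (indepFun_iff_map_prod_eq_prod_map_map (hmeas v).aemeasurable hYmeas.aemeasurable).mp hIndep
  rw [hEvent, ← Measure.map_apply ((hmeas v).prodMk hYmeas) hEmeas, hprod,
    Measure.prod_apply hEmeas]
  -- compute slice measure
  have hslice : ∀ t : ℝ, Measure.map Y P {y : s → ℝ | ∀ u : s, y u < t}
      = (volume.restrict (Set.Icc (0:ℝ) 1) (Set.Iio t)) ^ k := by
    intro t
    have hset : MeasurableSet {y : s → ℝ | ∀ u : s, y u < t} := by
      have : {y : s → ℝ | ∀ u : s, y u < t} = ⋂ u : s, {y : s → ℝ | y u < t} := by ext; simp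
      rw [this]
      exact MeasurableSet.iInter fun u => measurableSet_lt (measurable_pi_apply u) measurable_const
    rw [Measure.map_apply hYmeas hset]
    have hpre : Y ⁻¹' {y : s → ℝ | ∀ u : s, y u < t} = ⋂ u ∈ s, X u ⁻¹' Set.Iio t := by
      ext ω
      simp only [Set.mem_preimage, Set.mem_setOf_eq, Set.mem_iInter, Set.mem_Iio, hY]
      exact ⟨fun h u hu => h ⟨u, hu⟩, fun h u => h u.1 u.2⟩
    rw [hpre, hindep.meas_biInter (S := s) (s := fun u => X u ⁻¹' Set.Iio t)
      (fun u _ => ⟨Set.Iio t, measurableSet_Iio, rfl⟩)]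
    have : ∀ u ∈ s, P (X u ⁻¹' Set.Iio t) = volume.restrict (Set.Icc (0:ℝ) 1) (Set.Iio t) := by
      intro u _
      rw [← Measure.map_apply (hmeas u) measurableSet_Iio, hunif u]
    rw [Finset.prod_congr rfl this, Finset.prod_const]
  have hsl' : ∀ t : ℝ, Measure.map Y P (Prod.mk t ⁻¹' {p : ℝ × (s → ℝ) | ∀ u : s, p.2 u < p.1})
      = (volume.restrict (Set.Icc (0:ℝ) 1) (Set.Iio t)) ^ k := fun t => hslice t
  simp only [hsl']
  rw [hunif v]
  have hcong : ∀ x ∈ Set.Icc (0:ℝ) 1,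
      (volume.restrict (Set.Icc (0:ℝ) 1)) (Set.Iio x) ^ k = ENNReal.ofReal x ^ k := by
    intro x hx
    rw [Measure.restrict_apply measurableSet_Iio]
    have : Set.Iio x ∩ Set.Icc (0:ℝ) 1 = Set.Ico 0 x := by
      ext y
      simp only [Set.mem_inter_iff, Set.mem_Iio, Set.mem_Icc, Set.mem_Ico]
      exact ⟨fun h => ⟨h.2.1, h.1⟩, fun h => ⟨h.2, h.1, h.2.le.trans hx.2⟩⟩
    rw [this, Real.volume_Ico, sub_zero]
  calc ∫⁻ x in Set.Icc (0:ℝ) 1, (volume.restrict (Set.Icc (0:ℝ) 1)) (Set.Iio x) ^ k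
      = ∫⁻ x in Set.Icc (0:ℝ) 1, ENNReal.ofReal x ^ k :=
        setLIntegral_congr_fun measurableSet_Icc hcong
    _ = 1 / ((k : ℝ≥0∞) + 1) := aux_int k
    _ = 1 / ((G.degree v : ℝ≥0∞) + 1) := by rw [hdeg]


/-- in a finite simple graph `G` whose vertices independently draw
uniform-`[0,1]` priorities `X_v`, call `v` a strict local maximum if `X_v > X_u` for
every neighbor `u` of `v`.  The expected number of strict local maxima equals
`∑_v 1/(deg(v)+1)`; in particular if `G` is `d`-regular with `n` vertices it equals
`n/(d+1)`. -/
theorem stmt_10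
    {Ω : Type*} [MeasurableSpace Ω] (P : Measure Ω) [IsProbabilityMeasure P]
    {V : Type*} [Fintype V] (G : SimpleGraph V) [DecidableRel G.Adj]
    (X : V → Ω → ℝ)
    (hmeas : ∀ v, Measurable (X v))
    (hindep : iIndepFun X P)
    (hunif : ∀ v, Measure.map (X v) P = volume.restrict (Set.Icc (0 : ℝ) 1)) :
    (∫⁻ ω, (Nat.card {v : V // ∀ u, G.Adj v u → X v ω > X u ω} : ℝ≥0∞) ∂P
        = ∑ v : V, 1 / ((G.degree v : ℝ≥0∞) + 1))
      ∧ ∀ d : ℕ, (∀ v : V, G.degree v = d) →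
          ∫⁻ ω, (Nat.card {v : V // ∀ u, G.Adj v u → X v ω > X u ω} : ℝ≥0∞) ∂P
            = (Fintype.card V : ℝ≥0∞) / ((d : ℝ≥0∞) + 1) := by
  classical
  set A : V → Set Ω := fun v => {ω | ∀ u, G.Adj v u → X v ω > X u ω} with hA
  have hAmeas : ∀ v, MeasurableSet (A v) := by
    intro v
    have : A v = ⋂ u : V, {ω | G.Adj v u → X u ω < X v ω} := by
      ext ω; simp [hA]
    rw [this]
    refine MeasurableSet.iInter fun u => ?_
    by_cases h : G.Adj v u
    · have : {ω | G.Adj v u → X u ω < X v ω} = {ω | X u ω < X v ω} := by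
        ext ω; simp [h]
      rw [this]; exact measurableSet_lt (hmeas u) (hmeas v)
    · have : {ω | G.Adj v u → X u ω < X v ω} = Set.univ := by
        ext ω; simp [h]
      rw [this]; exact MeasurableSet.univ
  have hcard : ∀ ω, (Nat.card {v : V // ∀ u, G.Adj v u → X v ω > X u ω} : ℝ≥0∞)
      = ∑ v : V, (A v).indicator (fun _ => (1 : ℝ≥0∞)) ω := by
    intro ω
    rw [Nat.card_eq_fintype_card, Fintype.card_subtype]
    rw [Finset.card_filter]
    push_cast
    refine Finset.sum_congr rfl fun v _ => ?_
    simp [Set.indicator_apply, hA]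
  have key : ∫⁻ ω, (Nat.card {v : V // ∀ u, G.Adj v u → X v ω > X u ω} : ℝ≥0∞) ∂P
      = ∑ v : V, 1 / ((G.degree v : ℝ≥0∞) + 1) := by
    simp_rw [hcard]
    rw [lintegral_finset_sum _ fun v _ => measurable_const.indicator (hAmeas v)]
    refine Finset.sum_congr rfl fun v _ => ?_
    rw [lintegral_indicator (hAmeas v), setLIntegral_const, one_mul]
    exact aux_prob P G X hmeas hindep hunif v
  refine ⟨key, fun d hd => ?_⟩
  rw [key]
  simp only [hd, Finset.sum_const, Finset.card_univ, nsmul_eq_mul, one_div]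
  rw [ENNReal.div_eq_inv_mul, mul_comm]
end
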